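/- arXiv:1404.1963 — 13 statements merged into one kernel-verified Lean document; each statement's English description precedes it below -/
import Mathlib

section
/- If n ≥ 2 and w̄ is a local minimizer of g(w) = (1/2)((1/2)‖w‖² − ν)² + (1/2)wᵀDw − ψᵀw with D = Diag(α₁,...,αₙ), α₁ ≤ α₂ ≤ ... ≤ αₙ, then (1/2)‖w̄‖² − ν + α₂ ≥ 0. -/
open Finset

lemma quartic_coeff_nonneg (a b c d : ℝ)
    (h : ∀ᶠ s in nhds (0:ℝ), 0 ≤ a*s + b*s^2 + c*s^3 + d*s^4) : 0 ≤ b := by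
  by_contra hb
  push_neg at hb
  rw [Metric.eventually_nhds_iff] at h
  obtain ⟨δ, hδ, H⟩ := h
  set t : ℝ := min (δ/2) (min 1 (-b / (|c| + |d| + 1))) with htdef
  have hcd : (0:ℝ) < |c| + |d| + 1 := by positivity
  have htpos : 0 < t := lt_min (by linarith) (lt_min one_pos (div_pos (by linarith) hcd))
  have ht1 : t ≤ 1 := le_trans (min_le_right _ _) (min_le_left _ _)
  have ht2 : t ≤ -b / (|c| + |d| + 1) := le_trans (min_le_right _ _) (min_le_right _ _)
  have ht3 : t * (|c| + |d| + 1) ≤ -b := (le_div_iff₀ hcd).mp ht2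
  have htδ : t < δ := lt_of_le_of_lt (min_le_left _ _) (by linarith)
  set s : ℝ := if 0 ≤ a then -t else t with hs
  have habs : |s| = t := by
    rcases le_or_gt 0 a with h'|h'
    · rw [hs, if_pos h', abs_neg, abs_of_pos htpos]
    · rw [hs, if_neg (not_le.mpr h'), abs_of_pos htpos]
  have hdist : dist s 0 < δ := by rw [Real.dist_eq, sub_zero, habs]; exact htδ
  have hH := H hdist
  have has : a * s ≤ 0 := by
    rcases le_or_gt 0 a with h'|h'
    · rw [hs, if_pos h']; nlinarith
    · rw [hs, if_neg (not_le.mpr h')]; nlinarith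
  have hs2 : s^2 = t^2 := by rw [← sq_abs, habs]
  have hc3 : c * s^3 ≤ |c| * t^3 := by
    calc c * s^3 ≤ |c * s^3| := le_abs_self _
    _ = |c| * |s|^3 := by rw [abs_mul, abs_pow]
    _ = |c| * t^3 := by rw [habs]
  have hd4 : d * s^4 ≤ |d| * t^4 := by
    calc d * s^4 ≤ |d * s^4| := le_abs_self _
    _ = |d| * |s|^4 := by rw [abs_mul, abs_pow]
    _ = |d| * t^4 := by rw [habs]
  have ht4 : |d| * t^4 ≤ |d| * t^3 := by
    have : t^4 ≤ t^3 := by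
      calc t^4 = t^3 * t := by ring
      _ ≤ t^3 * 1 := mul_le_mul_of_nonneg_left ht1 (pow_pos htpos 3).le
      _ = t^3 := by ring
    exact mul_le_mul_of_nonneg_left this (abs_nonneg d)
  have hkey : |c| * t^3 + |d| * t^3 ≤ (-b - t) * t^2 := by
    nlinarith [mul_le_mul_of_nonneg_right ht3 (sq_nonneg t)]
  have ht3pos : 0 < t^3 := by positivity
  nlinarith [hH, has, hc3, hd4, ht4, hkey, hs2]

theorem stmt1 {n : ℕ} (hn : 2 ≤ n) (α ψ : Fin n → ℝ) (hα : Monotone α) (ν : ℝ)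
    (g : (Fin n → ℝ) → ℝ)
    (hg : ∀ w, g w = (1/2) * ((1/2) * ∑ i, (w i)^2 - ν)^2
        + (1/2) * ∑ i, α i * (w i)^2 - ∑ i, ψ i * w i)
    (w : Fin n → ℝ) (hmin : IsLocalMin g w) :
    (1/2) * ∑ j, (w j)^2 - ν + α ⟨1, hn⟩ ≥ 0 := by
  have h0n : 0 < n := by omega
  set i0 : Fin n := ⟨0, h0n⟩ with hi0
  set i1 : Fin n := ⟨1, hn⟩ with hi1
  have hne : i0 ≠ i1 := by simp [hi0, hi1, Fin.ext_iff]
  have hle : α i0 ≤ α i1 := hα (by simp [hi0, hi1, Fin.le_def])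
  -- second order necessary condition along any direction v
  have key : ∀ v : Fin n → ℝ, 0 ≤ ((1/2) * ∑ i, (w i)^2 - ν) * (∑ i, (v i)^2)
      + (∑ i, w i * v i)^2 + ∑ i, α i * (v i)^2 := by
    intro v
    have expand : ∀ s : ℝ, g (fun i => w i + s * v i) - g w =
        (((1/2) * ∑ i, (w i)^2 - ν) * (∑ i, w i * v i)
            + (∑ i, α i * (w i * v i)) - ∑ i, ψ i * v i) * s
        + ((((1/2) * ∑ i, (w i)^2 - ν) * (∑ i, (v i)^2)
            + (∑ i, w i * v i)^2 + ∑ i, α i * (v i)^2)/2) * s^2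
        + ((∑ i, w i * v i) * (∑ i, (v i)^2) / 2) * s^3
        + ((∑ i, (v i)^2)^2 / 8) * s^4 := by
      intro s
      have e1 : ∑ i, (w i + s * v i)^2
          = (∑ i, (w i)^2) + (2*s) * (∑ i, w i * v i) + s^2 * (∑ i, (v i)^2) := by
        rw [Finset.mul_sum, Finset.mul_sum, ← Finset.sum_add_distrib, ← Finset.sum_add_distrib]
        exact Finset.sum_congr rfl fun i _ => by ring
      have e2 : ∑ i, α i * (w i + s * v i)^2
          = (∑ i, α i * (w i)^2) + (2*s) * (∑ i, α i * (w i * v i))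
            + s^2 * (∑ i, α i * (v i)^2) := by
        rw [Finset.mul_sum, Finset.mul_sum, ← Finset.sum_add_distrib, ← Finset.sum_add_distrib]
        exact Finset.sum_congr rfl fun i _ => by ring
      have e3 : ∑ i, ψ i * (w i + s * v i)
          = (∑ i, ψ i * w i) + s * (∑ i, ψ i * v i) := by
        rw [Finset.mul_sum, ← Finset.sum_add_distrib]
        exact Finset.sum_congr rfl fun i _ => by ring
      simp only [hg]
      rw [e1, e2, e3]
      ring
    have hcont : Continuous (fun s : ℝ => (fun i => w i + s * v i)) :=
      continuous_pi fun i => continuous_const.add (continuous_id.mul continuous_const)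
    have htend : Filter.Tendsto (fun s : ℝ => (fun i => w i + s * v i)) (nhds 0) (nhds w) := by
      have h0 : (fun i => w i + (0:ℝ) * v i) = w := by funext i; ring
      have h1 := hcont.tendsto 0
      rwa [h0] at h1
    have hev : ∀ᶠ s in nhds (0:ℝ),
        0 ≤ (((1/2) * ∑ i, (w i)^2 - ν) * (∑ i, w i * v i)
            + (∑ i, α i * (w i * v i)) - ∑ i, ψ i * v i) * s
        + ((((1/2) * ∑ i, (w i)^2 - ν) * (∑ i, (v i)^2)
            + (∑ i, w i * v i)^2 + ∑ i, α i * (v i)^2)/2) * s^2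
        + ((∑ i, w i * v i) * (∑ i, (v i)^2) / 2) * s^3
        + ((∑ i, (v i)^2)^2 / 8) * s^4 := by
      filter_upwards [htend.eventually hmin] with s hs
      have := expand s
      linarith
    have := quartic_coeff_nonneg _ _ _ _ hev
    linarith
  have twosum : ∀ f : Fin n → ℝ, (∀ i, i ≠ i0 → i ≠ i1 → f i = 0) → ∑ i, f i = f i0 + f i1 := by
    intro f hf
    rw [← Finset.sum_subset (Finset.subset_univ {i0, i1})]
    · rw [Finset.sum_pair hne]
    · intro x _ hx
      simp only [Finset.mem_insert, Finset.mem_singleton] at hx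
      push_neg at hx
      exact hf x hx.1 hx.2
  by_cases hw : w i0 = 0 ∧ w i1 = 0
  · set v : Fin n → ℝ := fun i => if i = i1 then 1 else 0 with hv
    have hv0 : v i0 = 0 := by simp [hv, hne]
    have hv1 : v i1 = 1 := by simp [hv]
    have hvz : ∀ i, i ≠ i0 → i ≠ i1 → v i = 0 := by intro i _ h2; simp [hv, h2]
    have hq : ∑ i, (v i)^2 = 1 := by
      rw [twosum _ (fun i h1 h2 => by rw [hvz i h1 h2]; ring), hv0, hv1]; ring
    have hp : ∑ i, w i * v i = 0 := by
      rw [twosum _ (fun i h1 h2 => by rw [hvz i h1 h2]; ring), hv0, hv1, hw.1, hw.2]; ring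
    have hqa : ∑ i, α i * (v i)^2 = α i1 := by
      rw [twosum _ (fun i h1 h2 => by rw [hvz i h1 h2]; ring), hv0, hv1]; ring
    have h := key v
    rw [hq, hp, hqa] at h
    linarith
  · set v : Fin n → ℝ := fun i => if i = i0 then w i1 else if i = i1 then -(w i0) else 0 with hv
    have hv0 : v i0 = w i1 := by simp [hv]
    have hv1 : v i1 = -(w i0) := by simp [hv, hne.symm]
    have hvz : ∀ i, i ≠ i0 → i ≠ i1 → v i = 0 := by intro i h1 h2; simp [hv, h1, h2]
    have hq : ∑ i, (v i)^2 = (w i1)^2 + (w i0)^2 := by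
      rw [twosum _ (fun i h1 h2 => by rw [hvz i h1 h2]; ring), hv0, hv1]; ring
    have hp : ∑ i, w i * v i = 0 := by
      rw [twosum _ (fun i h1 h2 => by rw [hvz i h1 h2]; ring), hv0, hv1]; ring
    have hqa : ∑ i, α i * (v i)^2 = α i0 * (w i1)^2 + α i1 * (w i0)^2 := by
      rw [twosum _ (fun i h1 h2 => by rw [hvz i h1 h2]; ring), hv0, hv1]; ring
    have h := key v
    rw [hq, hp, hqa] at h
    have hqpos : 0 < (w i1)^2 + (w i0)^2 := by
      rcases not_and_or.mp hw with h0 | h1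
      · have h2 : (w i0)^2 ≠ 0 := pow_ne_zero 2 h0
        have := sq_nonneg (w i0)
        have := sq_nonneg (w i1)
        rcases lt_or_eq_of_le ‹0 ≤ (w i0)^2› with hlt | heq
        · linarith
        · exact absurd heq.symm h2
      · have h2 : (w i1)^2 ≠ 0 := pow_ne_zero 2 h1
        have := sq_nonneg (w i0)
        have := sq_nonneg (w i1)
        rcases lt_or_eq_of_le ‹0 ≤ (w i1)^2› with hlt | heq
        · linarith
        · exact absurd heq.symm h2
    nlinarith [h, hqpos, hle, sq_nonneg (w i0), sq_nonneg (w i1)]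
end

section
/- If n ≥ 2, α₁ < α₂, and w̄ is a local minimizer of g(w) = (1/2)((1/2)‖w‖² − ν)² + (1/2)wᵀDw − ψᵀw, then (1/2)‖w̄‖² − ν + α₂ > 0 (the inequality is strict). -/
open Finset Filter Topology

set_option maxHeartbeats 1000000

lemma quartic_loc_min {a1 a2 a3 a4 : ℝ}
    (h : ∀ᶠ s in 𝓝 (0:ℝ), 0 ≤ a1*s + a2*s^2 + a3*s^3 + a4*s^4) :
    a1 = 0 ∧ 0 ≤ a2 := by
  have hc : Continuous fun s : ℝ => a1 + a2*s + a3*s^2 + a4*s^3 := by continuity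
  have htend : Tendsto (fun s : ℝ => a1 + a2*s + a3*s^2 + a4*s^3) (𝓝 0) (𝓝 a1) := by
    have := hc.tendsto 0
    simpa using this
  have ha1pos : 0 ≤ a1 := by
    have ht : Tendsto (fun s : ℝ => a1 + a2*s + a3*s^2 + a4*s^3) (𝓝[>] (0:ℝ)) (𝓝 a1) :=
      htend.mono_left nhdsWithin_le_nhds
    refine ge_of_tendsto ht ?_
    filter_upwards [h.filter_mono nhdsWithin_le_nhds, self_mem_nhdsWithin] with s hs hs'
    have hs0 : (0:ℝ) < s := hs'
    nlinarith [hs]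
  have ha1neg : a1 ≤ 0 := by
    have ht : Tendsto (fun s : ℝ => a1 + a2*s + a3*s^2 + a4*s^3) (𝓝[<] (0:ℝ)) (𝓝 a1) :=
      htend.mono_left nhdsWithin_le_nhds
    refine le_of_tendsto ht ?_
    filter_upwards [h.filter_mono nhdsWithin_le_nhds, self_mem_nhdsWithin] with s hs hs'
    have hs0 : s < (0:ℝ) := hs'
    nlinarith [hs]
  have ha1 : a1 = 0 := le_antisymm ha1neg ha1pos
  refine ⟨ha1, ?_⟩
  have hc2 : Continuous fun s : ℝ => a2 + a3*s + a4*s^2 := by continuity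
  have htend2 : Tendsto (fun s : ℝ => a2 + a3*s + a4*s^2) (𝓝[≠] 0) (𝓝 a2) := by
    have := hc2.tendsto 0
    simp only [mul_zero, add_zero, zero_pow, ne_eq] at this
    refine Tendsto.mono_left ?_ nhdsWithin_le_nhds
    simpa using this
  refine ge_of_tendsto htend2 ?_
  filter_upwards [h.filter_mono nhdsWithin_le_nhds, self_mem_nhdsWithin] with s hs hs'
  have hs0 : s ≠ 0 := hs'
  have hsq : 0 < s^2 := by positivity
  subst ha1
  nlinarith [hs]

theorem stmt2 {n : ℕ} (hn : 2 ≤ n) (α ψ : Fin n → ℝ) (hα : Monotone α) (ν : ℝ)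
    (h12 : α ⟨0, by omega⟩ < α ⟨1, hn⟩)
    (g : (Fin n → ℝ) → ℝ)
    (hg : ∀ w, g w = (1/2) * ((1/2) * ∑ i, (w i)^2 - ν)^2
        + (1/2) * ∑ i, α i * (w i)^2 - ∑ i, ψ i * w i)
    (w : Fin n → ℝ) (hmin : IsLocalMin g w) :
    (1/2) * ∑ j, (w j)^2 - ν + α ⟨1, hn⟩ > 0 := by
  by_contra hcon
  push_neg at hcon
  set i0 : Fin n := ⟨0, by omega⟩ with hi0
  set i1 : Fin n := ⟨1, hn⟩ with hi1
  have hne : i0 ≠ i1 := by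
    simp [hi0, hi1, Fin.ext_iff]
  set c : ℝ → ℝ → (Fin n → ℝ) :=
    fun x y => Function.update (Function.update w i0 x) i1 y with hc
  have hcw : c (w i0) (w i1) = w := by
    funext i
    simp only [hc, Function.update_apply]
    split_ifs with h h'
    · rw [h]
    · rw [h']
    · rfl
  have hsum : ∀ (F : Fin n → ℝ → ℝ) (x y : ℝ),
      ∑ i, F i (c x y i) =
        (∑ i, F i (w i)) - F i0 (w i0) - F i1 (w i1) + F i0 x + F i1 y := by
    intro F x y
    have hval : ∀ i, F i (c x y i) = F i (w i)
        + (if i0 = i then F i0 x - F i0 (w i0) else 0)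
        + (if i1 = i then F i1 y - F i1 (w i1) else 0) := by
      intro i
      rcases eq_or_ne i i1 with h1 | h1
      · subst h1
        have hcv : c x y i1 = y := by simp [hc, Function.update_apply]
        rw [hcv, if_neg hne, if_pos rfl]; ring
      · rcases eq_or_ne i i0 with h0 | h0
        · subst h0
          have hcv : c x y i0 = x := by simp [hc, Function.update_apply, h1]
          rw [hcv, if_pos rfl, if_neg (Ne.symm h1)]; ring
        · have hcv : c x y i = w i := by simp [hc, Function.update_apply, h0, h1]
          rw [hcv, if_neg (Ne.symm h0), if_neg (Ne.symm h1)]; ring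
    rw [Finset.sum_congr rfl (fun i _ => hval i)]
    rw [Finset.sum_add_distrib, Finset.sum_add_distrib, Finset.sum_ite_eq, Finset.sum_ite_eq]
    simp only [Finset.mem_univ, if_true]
    ring
  have hGform : ∀ x y : ℝ, g (c x y) =
      (1/2) * ((1/2) * ((∑ i, (w i)^2) - (w i0)^2 - (w i1)^2 + x^2 + y^2) - ν)^2
      + (1/2) * ((∑ i, α i * (w i)^2) - α i0 * (w i0)^2 - α i1 * (w i1)^2
          + α i0 * x^2 + α i1 * y^2)
      - ((∑ i, ψ i * w i) - ψ i0 * (w i0) - ψ i1 * (w i1) + ψ i0 * x + ψ i1 * y) := by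
    intro x y
    rw [hg]
    rw [hsum (fun i z => z^2) x y, hsum (fun i z => α i * z^2) x y,
        hsum (fun i z => ψ i * z) x y]
  have hev : ∀ x y : ℝ → ℝ, Continuous x → Continuous y → x 0 = w i0 → y 0 = w i1 →
      ∀ᶠ s in 𝓝 (0:ℝ), 0 ≤ g (c (x s) (y s)) - g w := by
    intro x y hx hy hx0 hy0
    have hγ : Continuous fun s => c (x s) (y s) := by
      apply continuous_pi
      intro i
      simp only [hc, Function.update_apply]
      split_ifs
      · exact hy
      · exact hx
      · exact continuous_const
    have ht : Tendsto (fun s => c (x s) (y s)) (𝓝 0) (𝓝 w) := by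
      have := hγ.tendsto 0
      rwa [hx0, hy0, hcw] at this
    have hmin' : ∀ᶠ u in 𝓝 w, g w ≤ g u := hmin
    exact (ht.eventually hmin').mono fun s hs => by linarith
  have hline : ∀ v0 v1 : ℝ,
      ((1/2 * ∑ j, (w j)^2 - ν + α i0) * (w i0) * v0
        + (1/2 * ∑ j, (w j)^2 - ν + α i1) * (w i1) * v1 - ψ i0 * v0 - ψ i1 * v1 = 0)
      ∧ 0 ≤ (1/2) * (1/2 * ∑ j, (w j)^2 - ν) * (v0^2 + v1^2)
          + (1/2) * ((w i0) * v0 + (w i1) * v1)^2 + (1/2) * (α i0 * v0^2 + α i1 * v1^2) := by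
    intro v0 v1
    have hev' := hev (fun s => w i0 + s*v0) (fun s => w i1 + s*v1)
      (by continuity) (by continuity) (by simp) (by simp)
    apply quartic_loc_min (a3 := ((w i0) * v0 + (w i1) * v1) * (v0^2 + v1^2) / 2)
      (a4 := (v0^2 + v1^2)^2 / 8)
    refine hev'.mono fun s hs => ?_
    have key : g (c (w i0 + s*v0) (w i1 + s*v1)) - g w =
        ((1/2 * ∑ j, (w j)^2 - ν + α i0) * (w i0) * v0
          + (1/2 * ∑ j, (w j)^2 - ν + α i1) * (w i1) * v1 - ψ i0 * v0 - ψ i1 * v1) * s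
        + ((1/2) * (1/2 * ∑ j, (w j)^2 - ν) * (v0^2 + v1^2)
          + (1/2) * ((w i0) * v0 + (w i1) * v1)^2 + (1/2) * (α i0 * v0^2 + α i1 * v1^2)) * s^2
        + (((w i0) * v0 + (w i1) * v1) * (v0^2 + v1^2) / 2) * s^3
        + ((v0^2 + v1^2)^2 / 8) * s^4 := by
      rw [hGform, hg w]
      ring
    linarith [key ▸ hs]
  have hP0 : ψ i0 = (1/2 * ∑ j, (w j)^2 - ν + α i0) * w i0 := by
    linear_combination -(hline 1 0).1
  have hP1 : ψ i1 = (1/2 * ∑ j, (w j)^2 - ν + α i1) * w i1 := by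
    linear_combination -(hline 0 1).1
  have hQ0 := (hline 1 0).2
  have hQ2 := (hline (w i1) (-(w i0))).2
  have htA : 1/2 * ∑ j, (w j)^2 - ν + α i0 < 0 := by linarith
  have hW0pos : 0 < (w i0)^2 := by nlinarith
  have hW1 : w i1 = 0 := by
    by_contra h
    have h1 : 0 < (w i1)^2 := by positivity
    nlinarith [hQ2]
  have htB : 1/2 * ∑ j, (w j)^2 - ν + α i1 = 0 := by
    refine le_antisymm hcon ?_
    nlinarith [hQ2, hW1]
  have hP1z : ψ i1 = 0 := by rw [hP1, hW1, mul_zero]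
  have hev2 := hev (fun θ => w i0 * Real.cos θ) (fun θ => w i0 * Real.sin θ)
    (by continuity) (by continuity) (by simp) (by simp [hW1])
  have key2 : ∀ θ : ℝ, g (c (w i0 * Real.cos θ) (w i0 * Real.sin θ)) - g w
      = -(1/2)*(α i1 - α i0)*(w i0)^2*(1 - Real.cos θ)^2 := by
    intro θ
    have hss : (w i0 * Real.sin θ)^2 = (w i0)^2 - (w i0 * Real.cos θ)^2 := by
      linear_combination (w i0)^2 * Real.sin_sq_add_cos_sq θ
    rw [hGform, hg w, hP0, hP1z, hW1, hss]
    linear_combination ((w i0)^2 * (1 - Real.cos θ)) * htB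
  rw [Metric.eventually_nhds_iff] at hev2
  obtain ⟨δ, hδ, hball⟩ := hev2
  have hθpos : 0 < min δ 1 / 2 := half_pos (lt_min hδ one_pos)
  have hθδ : dist (min δ 1 / 2) 0 < δ := by
    rw [Real.dist_eq, sub_zero, abs_of_pos hθpos]
    have := min_le_left δ 1
    linarith
  have hle := hball hθδ
  rw [key2 (min δ 1 / 2)] at hle
  have hcne : Real.cos (min δ 1 / 2) ≠ 1 := by
    intro h
    have hπ := Real.pi_gt_three
    have hm := min_le_right δ 1
    have h2 : min δ 1 / 2 < 2 * Real.pi := by linarith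
    have h2' : -(2 * Real.pi) < min δ 1 / 2 := by linarith
    exact hθpos.ne' ((Real.cos_eq_one_iff_of_lt_of_lt h2' h2).1 h)
  have hq : 0 < (1 - Real.cos (min δ 1 / 2))^2 := by
    have h' : 1 - Real.cos (min δ 1 / 2) ≠ 0 := sub_ne_zero.mpr (Ne.symm hcne)
    positivity
  nlinarith [hle, mul_pos hW0pos hq, h12]
end

section
/- Let w* be a critical point of g(w) = (1/2)((1/2)‖w‖² − ν)² + (1/2)wᵀDw − ψᵀw, i.e., ((1/2)‖w*‖² − ν)w* + Dw* − ψ = 0. If (1/2)‖w*‖² − ν + α₁ ≥ 0, where α₁ is the smallest diagonal entry of D, then w* is a global minimizer of g on ℝⁿ. -/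
open Finset

theorem stmt3 {n : ℕ} (hn : 1 ≤ n) (α ψ : Fin n → ℝ) (hα : Monotone α) (ν : ℝ)
    (g : (Fin n → ℝ) → ℝ)
    (hg : ∀ w, g w = (1/2) * ((1/2) * ∑ i, (w i)^2 - ν)^2
        + (1/2) * ∑ i, α i * (w i)^2 - ∑ i, ψ i * w i)
    (w : Fin n → ℝ)
    (hcrit : ∀ i, ((1/2) * ∑ j, (w j)^2 - ν) * w i + α i * w i - ψ i = 0)
    (hbig : (1/2) * ∑ j, (w j)^2 - ν + α ⟨0, hn⟩ ≥ 0) :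
    ∀ v : Fin n → ℝ, g w ≤ g v := by
  intro v
  set t : ℝ := (1/2) * ∑ j, (w j)^2 - ν with ht
  have hψ : ∀ i, ψ i = t * w i + α i * w i := by
    intro i; have := hcrit i; linarith
  have e1 : ∑ i, ψ i * v i = t * (∑ i, v i * w i) + ∑ i, α i * (v i * w i) := by
    rw [Finset.mul_sum, ← Finset.sum_add_distrib]
    exact Finset.sum_congr rfl fun i _ => by rw [hψ i]; ring
  have e2 : ∑ i, ψ i * w i = t * (∑ i, (w i)^2) + ∑ i, α i * (w i)^2 := by
    rw [Finset.mul_sum, ← Finset.sum_add_distrib]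
    exact Finset.sum_congr rfl fun i _ => by rw [hψ i]; ring
  have e3 : ∑ i, (t + α i) * (v i - w i)^2
      = t * (∑ i, (v i)^2) - 2 * (t * ∑ i, v i * w i) + t * (∑ i, (w i)^2)
        + (∑ i, α i * (v i)^2) - 2 * (∑ i, α i * (v i * w i)) + ∑ i, α i * (w i)^2 := by
    simp only [Finset.mul_sum]
    rw [← Finset.sum_sub_distrib, ← Finset.sum_add_distrib, ← Finset.sum_add_distrib,
      ← Finset.sum_sub_distrib, ← Finset.sum_add_distrib]
    exact Finset.sum_congr rfl fun i _ => by ring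
  have key : g v - g w = (1/2) * ((1/2) * ∑ i, (v i)^2 - (1/2) * ∑ i, (w i)^2)^2
      + (1/2) * ∑ i, (t + α i) * (v i - w i)^2 := by
    rw [hg, hg, e1, e2, e3, ht]
    ring
  have hnn : 0 ≤ ∑ i, (t + α i) * (v i - w i)^2 := by
    apply Finset.sum_nonneg
    intro i _
    apply mul_nonneg _ (sq_nonneg _)
    have h0 : α ⟨0, hn⟩ ≤ α i := hα (by exact Fin.mk_le_of_le_val (Nat.zero_le _))
    linarith
  nlinarith [sq_nonneg ((1/2) * ∑ i, (v i)^2 - (1/2) * ∑ i, (w i)^2)]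
end

section
/- The function g(w) = (1/2)((1/2)‖w‖² − ν)² + (1/2)wᵀDw − ψᵀw has at most one local minimizer that is not a global minimizer. -/
open Finset Filter Topology

lemma sum_single_aux {n : ℕ} (j : Fin n) (F : Fin n → ℝ → ℝ) (hF : ∀ i, F i 0 = 0) (x : ℝ) :
    ∑ i, F i (if i = j then x else 0) = F j x := by
  rw [Finset.sum_eq_single j (fun b _ hb => by simp [hb, hF]) (by simp)]
  simp

lemma sum_pair_aux {n : ℕ} {j k : Fin n} (hjk : j ≠ k) (F : Fin n → ℝ → ℝ)
    (hF : ∀ i, F i 0 = 0) (x y : ℝ) :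
    ∑ i, F i (if i = j then x else if i = k then y else 0) = F j x + F k y := by
  rw [← Finset.sum_subset (Finset.subset_univ ({j, k} : Finset (Fin n)))
      (fun i _ hi => by
        simp only [Finset.mem_insert, Finset.mem_singleton, not_or] at hi
        simp [hi.1, hi.2, hF])]
  rw [Finset.sum_pair hjk]
  simp [hjk, Ne.symm hjk]

lemma expandE {n : ℕ} (α ψ : Fin n → ℝ) (ν : ℝ) (g : (Fin n → ℝ) → ℝ)
    (hg : ∀ w, g w = (1/2) * ((1/2) * ∑ i, (w i)^2 - ν)^2
        + (1/2) * ∑ i, α i * (w i)^2 - ∑ i, ψ i * w i)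
    (σ : ℝ) (w : Fin n → ℝ) (hσ : σ = (1/2) * ∑ i, (w i)^2 - ν) (v : Fin n → ℝ) :
    g (fun i => w i + v i) = g w + (∑ i, ((α i + σ) * w i - ψ i) * v i)
      + (1/2) * ∑ i, (α i + σ) * (v i)^2
      + (1/2) * (∑ i, w i * v i + (1/2) * ∑ i, (v i)^2)^2 := by
  have hA : ∑ i, (w i + v i)^2
      = (∑ i, (w i)^2) + 2*(∑ i, w i * v i) + ∑ i, (v i)^2 := by
    rw [Finset.mul_sum, ← Finset.sum_add_distrib, ← Finset.sum_add_distrib]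
    exact Finset.sum_congr rfl fun i _ => by ring
  have hB : ∑ i, α i * (w i + v i)^2
      = (∑ i, α i * (w i)^2) + 2*(∑ i, α i * (w i * v i)) + ∑ i, α i * (v i)^2 := by
    rw [Finset.mul_sum, ← Finset.sum_add_distrib, ← Finset.sum_add_distrib]
    exact Finset.sum_congr rfl fun i _ => by ring
  have hC : ∑ i, ψ i * (w i + v i) = (∑ i, ψ i * w i) + ∑ i, ψ i * v i := by
    rw [← Finset.sum_add_distrib]
    exact Finset.sum_congr rfl fun i _ => by ring
  have hD : ∑ i, ((α i + σ) * w i - ψ i) * v i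
      = (∑ i, α i * (w i * v i)) + σ * (∑ i, w i * v i) - ∑ i, ψ i * v i := by
    rw [Finset.mul_sum, ← Finset.sum_add_distrib, ← Finset.sum_sub_distrib]
    exact Finset.sum_congr rfl fun i _ => by ring
  have hE : ∑ i, (α i + σ) * (v i)^2 = (∑ i, α i * (v i)^2) + σ * ∑ i, (v i)^2 := by
    rw [Finset.mul_sum, ← Finset.sum_add_distrib]
    exact Finset.sum_congr rfl fun i _ => by ring
  rw [hg, hg]
  beta_reduce
  rw [hA, hB, hC, hD, hE, hσ]
  ring

lemma no_min {n : ℕ} {g : (Fin n → ℝ) → ℝ} {w : Fin n → ℝ}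
    (c : ℝ → Fin n → ℝ) (hc : Continuous c) (h0 : c 0 = w)
    (hlt : ∀ᶠ t in 𝓝[>] (0:ℝ), g (c t) < g w) : ¬ IsLocalMin g w := by
  intro h
  have htt : Filter.Tendsto c (𝓝[>] (0:ℝ)) (𝓝 w) := by
    have h2 := hc.tendsto 0
    rw [h0] at h2
    exact h2.mono_left nhdsWithin_le_nhds
  have h2 : ∀ᶠ t in 𝓝[>] (0:ℝ), g w ≤ g (c t) := htt.eventually h
  obtain ⟨t, h1t, h2t⟩ := (hlt.and h2).exists
  exact absurd h2t (not_le.2 h1t)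

lemma descent_gen {n : ℕ} {g : (Fin n → ℝ) → ℝ} {w : Fin n → ℝ}
    (c : ℝ → Fin n → ℝ) (hc : Continuous c) (h0 : c 0 = w)
    (G : ℝ → ℝ) (hG : Continuous G) (hG0 : G 0 < 0) (k : ℕ)
    (heq : ∀ t, g (c t) = g w + t ^ k * G t) : ¬ IsLocalMin g w := by
  apply no_min c hc h0
  have h1 : ∀ᶠ t in 𝓝 (0:ℝ), G t < 0 := (hG.tendsto 0).eventually_lt_const hG0
  filter_upwards [h1.filter_mono nhdsWithin_le_nhds, self_mem_nhdsWithin] with t h1t h2t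
  have ht : (0:ℝ) < t := h2t
  have h3 := mul_neg_of_pos_of_neg (pow_pos ht k) h1t
  rw [heq t]; linarith

lemma descent_quad {n : ℕ} (α ψ : Fin n → ℝ) (ν : ℝ) (g : (Fin n → ℝ) → ℝ)
    (hg : ∀ w, g w = (1/2) * ((1/2) * ∑ i, (w i)^2 - ν)^2
        + (1/2) * ∑ i, α i * (w i)^2 - ∑ i, ψ i * w i)
    (σ : ℝ) (w : Fin n → ℝ) (hσ : σ = (1/2) * ∑ i, (w i)^2 - ν)
    (hr : ∀ i, (α i + σ) * w i = ψ i) (d : Fin n → ℝ)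
    (hQ : (∑ i, (α i + σ) * (d i)^2) + (∑ i, w i * d i)^2 < 0) : ¬ IsLocalMin g w := by
  set Sa := ∑ i, (α i + σ) * (d i)^2 with hSa
  set B := ∑ i, w i * d i with hB
  set C := ∑ i, (d i)^2 with hC
  refine descent_gen (fun t => fun i => w i + t * d i) ?_ ?_
      (fun t => (1/2) * Sa + (1/2) * (B + t * ((1/2) * C))^2) ?_ ?_ 2 ?_
  · exact continuous_pi fun i => continuous_const.add (continuous_id.mul continuous_const)
  · funext i; simp
  · fun_prop
  · have hB0 : B + 0 * ((1/2) * C) = B := by ring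
    simp only [hB0]
    nlinarith [hQ]
  · intro t
    rw [expandE α ψ ν g hg σ w hσ (fun i => t * d i)]
    have e1 : ∑ i, ((α i + σ) * w i - ψ i) * (t * d i) = 0 :=
      Finset.sum_eq_zero fun i _ => by rw [sub_eq_zero.2 (hr i), zero_mul]
    have e2 : ∑ i, (α i + σ) * (t * d i)^2 = t^2 * Sa := by
      rw [hSa, Finset.mul_sum]; exact Finset.sum_congr rfl fun i _ => by ring
    have e3 : ∑ i, w i * (t * d i) = t * B := by
      rw [hB, Finset.mul_sum]; exact Finset.sum_congr rfl fun i _ => by ring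
    have e4 : ∑ i, (t * d i)^2 = t^2 * C := by
      rw [hC, Finset.mul_sum]; exact Finset.sum_congr rfl fun i _ => by ring
    rw [e1, e2, e3, e4]; ring

section
variable {n : ℕ}

set_option maxHeartbeats 2000000 in
lemma facts (hn : 1 ≤ n) (α ψ : Fin n → ℝ) (hα : Monotone α) (ν : ℝ)
    (g : (Fin n → ℝ) → ℝ)
    (hg : ∀ w, g w = (1/2) * ((1/2) * ∑ i, (w i)^2 - ν)^2
        + (1/2) * ∑ i, α i * (w i)^2 - ∑ i, ψ i * w i)
    (w : Fin n → ℝ) (σ : ℝ) (hσ : σ = (1/2) * ∑ i, (w i)^2 - ν)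
    (h : IsLocalMin g w) (h' : ¬ ∀ v, g w ≤ g v) :
    (∀ i, (α i + σ) * w i = ψ i) ∧ (α ⟨0, hn⟩ + σ < 0) ∧
    (∀ i, i ≠ (⟨0, hn⟩ : Fin n) → 0 < α i + σ) ∧ w ⟨0, hn⟩ ≠ 0 ∧
    (∑ i, (w i)^2 / (α i + σ) ≤ -1) := by
  set i0 : Fin n := ⟨0, hn⟩ with hi0
  -- F1 : stationarity
  have F1 : ∀ i, (α i + σ) * w i = ψ i := by
    by_contra hcon
    push_neg at hcon
    obtain ⟨j, hj⟩ := hcon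
    set r : Fin n → ℝ := fun i => (α i + σ) * w i - ψ i with hrdef
    set d : Fin n → ℝ := fun i => -(r i) with hddef
    have hrj : r j ≠ 0 := sub_ne_zero.2 hj
    have hRpos : 0 < ∑ i, (r i)^2 :=
      Finset.sum_pos' (fun i _ => sq_nonneg _)
        ⟨j, Finset.mem_univ j, lt_of_le_of_ne (sq_nonneg _) (Ne.symm (pow_ne_zero 2 hrj))⟩
    set R : ℝ := ∑ i, r i * d i with hRdef
    have hRval : R = -∑ i, (r i)^2 := by
      rw [hRdef, ← Finset.sum_neg_distrib]
      exact Finset.sum_congr rfl fun i _ => by simp [hddef]; ring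
    set Sa := ∑ i, (α i + σ) * (d i)^2 with hSa
    set B := ∑ i, w i * d i with hB
    set C := ∑ i, (d i)^2 with hC
    refine descent_gen (fun t => fun i => w i + t * d i) ?_ ?_
        (fun t => R + t * ((1/2) * Sa + (1/2) * (B + t * ((1/2) * C))^2)) ?_ ?_ 1 ?_ h
    · exact continuous_pi fun i => continuous_const.add (continuous_id.mul continuous_const)
    · funext i; simp
    · fun_prop
    · simp only [zero_mul, mul_zero, add_zero]
      rw [hRval]; linarith
    · intro t
      rw [expandE α ψ ν g hg σ w hσ (fun i => t * d i)]
      have e1 : ∑ i, ((α i + σ) * w i - ψ i) * (t * d i) = t * R := by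
        rw [hRdef, Finset.mul_sum]
        exact Finset.sum_congr rfl fun i _ => by rw [hrdef]; ring
      have e2 : ∑ i, (α i + σ) * (t * d i)^2 = t^2 * Sa := by
        rw [hSa, Finset.mul_sum]; exact Finset.sum_congr rfl fun i _ => by ring
      have e3 : ∑ i, w i * (t * d i) = t * B := by
        rw [hB, Finset.mul_sum]; exact Finset.sum_congr rfl fun i _ => by ring
      have e4 : ∑ i, (t * d i)^2 = t^2 * C := by
        rw [hC, Finset.mul_sum]; exact Finset.sum_congr rfl fun i _ => by ring
      rw [e1, e2, e3, e4]; ring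
  -- monotone
  have hi0le : ∀ i : Fin n, α i0 ≤ α i := fun i => hα (by simp [hi0, Fin.le_def])
  -- F2
  have F2 : α i0 + σ < 0 := by
    by_contra hcon
    push_neg at hcon
    apply h'
    intro v
    have hE := expandE α ψ ν g hg σ w hσ (fun i => v i - w i)
    have hv : (fun i => w i + (v i - w i)) = v := by funext i; ring
    rw [hv] at hE
    rw [hE]
    have t1 : ∑ i, ((α i + σ) * w i - ψ i) * (v i - w i) = 0 :=
      Finset.sum_eq_zero fun i _ => by rw [sub_eq_zero.2 (F1 i), zero_mul]
    have t2 : 0 ≤ ∑ i, (α i + σ) * (v i - w i)^2 :=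
      Finset.sum_nonneg fun i _ => mul_nonneg (by linarith [hi0le i]) (sq_nonneg _)
    rw [t1]
    nlinarith [sq_nonneg (∑ i, w i * (v i - w i) + (1/2) * ∑ i, (v i - w i)^2)]
  -- F3
  have F3 : w i0 ≠ 0 := by
    intro hw0
    refine descent_quad α ψ ν g hg σ w hσ F1 (fun i => if i = i0 then 1 else 0) ?_ h
    have q1 : ∑ i, (α i + σ) * ((if i = i0 then (1:ℝ) else 0))^2 = (α i0 + σ) * 1^2 :=
      sum_single_aux i0 (fun i z => (α i + σ) * z^2) (fun i => by ring) 1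
    have q2 : ∑ i, w i * (if i = i0 then (1:ℝ) else 0) = w i0 * 1 :=
      sum_single_aux i0 (fun i z => w i * z) (fun i => by ring) 1
    rw [q1, q2, hw0]
    simpa using F2
  -- F4
  have F4 : ∀ j, j ≠ i0 → 0 < α j + σ := by
    intro j hj
    by_contra hcon
    push_neg at hcon
    have hj' : i0 ≠ j := Ne.symm hj
    by_cases hwj : w j = 0
    · rcases lt_or_eq_of_le hcon with haj | haj
      · -- α j + σ < 0, w j = 0 : direction e_j
        refine descent_quad α ψ ν g hg σ w hσ F1 (fun i => if i = j then 1 else 0) ?_ h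
        have q1 : ∑ i, (α i + σ) * ((if i = j then (1:ℝ) else 0))^2 = (α j + σ) * 1^2 :=
          sum_single_aux j (fun i z => (α i + σ) * z^2) (fun i => by ring) 1
        have q2 : ∑ i, w i * (if i = j then (1:ℝ) else 0) = w j * 1 :=
          sum_single_aux j (fun i z => w i * z) (fun i => by ring) 1
        rw [q1, q2, hwj]
        nlinarith [haj]
      · -- α j + σ = 0, w j = 0 : curve
        set W := w i0 with hWdef
        have hW : W ≠ 0 := F3
        have hW2 : (0:ℝ) < W^2 := lt_of_le_of_ne (sq_nonneg _) (Ne.symm (pow_ne_zero 2 hW))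
        set A : ℝ → ℝ := fun t => W * (Real.sqrt (1 - t^2 / W^2) - 1) with hAdef
        have hAcont : Continuous A := by
          rw [hAdef]; fun_prop
        refine no_min (g := g) (w := w)
            (fun t => fun i => w i + (if i = i0 then A t else if i = j then t else 0)) ?_ ?_ ?_ h
        · refine continuous_pi fun i => ?_
          by_cases h1 : i = i0 <;> by_cases h2 : i = j <;> simp [h1, h2, hj, hj'] <;> fun_prop
        · funext i
          have hA0 : A 0 = 0 := by simp [hAdef]
          by_cases h1 : i = i0 <;> by_cases h2 : i = j <;> simp [h1, h2, hj, hj', hA0]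
        · filter_upwards [Ioo_mem_nhdsGT_of_mem
            (show (0:ℝ) ∈ Set.Ico 0 |W| from ⟨le_refl 0, abs_pos.2 hW⟩)] with t ht
          have ht1 : 0 < t := ht.1
          have ht2 : t^2 < W^2 := by
            have := ht.2
            nlinarith [abs_nonneg W, sq_abs W]
          have hu1 : 0 ≤ 1 - t^2 / W^2 := by
            rw [sub_nonneg, div_le_one hW2]; linarith
          have hs2 : (Real.sqrt (1 - t^2 / W^2))^2 = 1 - t^2 / W^2 := Real.sq_sqrt hu1
          have hslt : Real.sqrt (1 - t^2 / W^2) < 1 := by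
            have h0 : 0 < t^2 / W^2 := div_pos (by positivity) hW2
            have hlt := Real.sqrt_lt_sqrt hu1 (show 1 - t^2 / W^2 < 1 by linarith)
            rwa [Real.sqrt_one] at hlt
          have hAne : A t ≠ 0 := by
            rw [hAdef]
            exact mul_ne_zero hW (ne_of_lt (by linarith))
          have hApos : 0 < (A t)^2 := lt_of_le_of_ne (sq_nonneg _) (Ne.symm (pow_ne_zero 2 hAne))
          have hid : W * (A t) + (1/2) * ((A t)^2 + t^2) = 0 := by
            have h2 : W^2 * (Real.sqrt (1 - t^2 / W^2))^2 = W^2 - t^2 := by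
              rw [hs2]; field_simp
            rw [hAdef]
            simp only []
            linear_combination (1/2) * h2
          have hgv := expandE α ψ ν g hg σ w hσ
            (fun i => if i = i0 then A t else if i = j then t else 0)
          have t1 : ∑ i, ((α i + σ) * w i - ψ i) *
              (if i = i0 then A t else if i = j then t else 0) = 0 :=
            Finset.sum_eq_zero fun i _ => by rw [sub_eq_zero.2 (F1 i), zero_mul]
          have t2 : ∑ i, (α i + σ) * (if i = i0 then A t else if i = j then t else 0)^2
              = (α i0 + σ) * (A t)^2 + (α j + σ) * t^2 :=
            sum_pair_aux hj' (fun i z => (α i + σ) * z^2) (fun i => by ring) _ _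
          have t3 : ∑ i, w i * (if i = i0 then A t else if i = j then t else 0)
              = w i0 * A t + w j * t :=
            sum_pair_aux hj' (fun i z => w i * z) (fun i => by ring) _ _
          have t4 : ∑ i, ((if i = i0 then A t else if i = j then t else 0))^2
              = (A t)^2 + t^2 :=
            sum_pair_aux hj' (fun _ z => z^2) (fun i => by ring) _ _
          rw [t1, t2, t3, t4, hwj, haj] at hgv
          rw [hgv]
          have hsq : (w i0 * A t + 0 * t + (1/2) * ((A t)^2 + t^2)) = 0 := by
            rw [← hWdef] at *; linarith [hid]
          rw [hsq]
          nlinarith [mul_neg_of_neg_of_pos F2 hApos]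
    · -- w j ≠ 0 : two-point direction
      refine descent_quad α ψ ν g hg σ w hσ F1
        (fun i => if i = i0 then w j else if i = j then -(w i0) else 0) ?_ h
      have q1 : ∑ i, (α i + σ) * ((if i = i0 then w j else if i = j then -(w i0) else 0))^2
          = (α i0 + σ) * (w j)^2 + (α j + σ) * (-(w i0))^2 :=
        sum_pair_aux hj' (fun i z => (α i + σ) * z^2) (fun i => by ring) _ _
      have q2 : ∑ i, w i * (if i = i0 then w j else if i = j then -(w i0) else 0)
          = w i0 * w j + w j * (-(w i0)) :=
        sum_pair_aux hj' (fun i z => w i * z) (fun i => by ring) _ _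
      rw [q1, q2]
      have hwj2 : 0 < (w j)^2 := lt_of_le_of_ne (sq_nonneg _) (Ne.symm (pow_ne_zero 2 hwj))
      have h1 : (α i0 + σ) * (w j)^2 < 0 := mul_neg_of_neg_of_pos F2 hwj2
      have h2 : (α j + σ) * (-(w i0))^2 ≤ 0 := mul_nonpos_of_nonpos_of_nonneg hcon (sq_nonneg _)
      nlinarith [h1, h2]
  -- F5
  have F5 : ∑ i, (w i)^2 / (α i + σ) ≤ -1 := by
    by_contra hcon
    push_neg at hcon
    set s : ℝ → ℝ := fun τ => ∑ i, (w i)^2 / (α i + σ + τ) with hsdef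
    have hs0 : s 0 = ∑ i, (w i)^2 / (α i + σ) := by
      rw [hsdef]; exact Finset.sum_congr rfl fun i _ => by rw [add_zero]
    have hcon0 : -1 < s 0 := by rw [hs0]; exact hcon
    set K : ℝ := ∑ i ∈ Finset.univ.erase i0, (w i)^2 / (α i + σ) with hKdef
    have hK0 : 0 ≤ K := Finset.sum_nonneg fun i hi =>
      div_nonneg (sq_nonneg _) (le_of_lt (F4 i (Finset.ne_of_mem_erase hi)))
    set y : ℝ := (min 0 (s 0) - 1) / 2 with hydef
    have hy1 : -1 < y := by
      have hmin := lt_min (by norm_num : (-1:ℝ) < 0) hcon0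
      rw [hydef]; linarith
    have hy2 : y < 0 := by
      have := min_le_left 0 (s 0); rw [hydef]; linarith
    have hy3 : y < s 0 := by
      have h1 := min_le_right 0 (s 0)
      have hmin := lt_min (by norm_num : (-1:ℝ) < 0) hcon0
      rw [hydef]; linarith
    set W := w i0 with hWdef
    have hW : W ≠ 0 := F3
    have hW2 : (0:ℝ) < W^2 := lt_of_le_of_ne (sq_nonneg _) (Ne.symm (pow_ne_zero 2 hW))
    have hKy : 0 < K - y + 1 := by linarith
    set ε : ℝ := min (-(α i0 + σ)/2) (W^2 / (2*(K - y + 1))) with hεdef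
    have hε : 0 < ε := lt_min (by linarith) (by positivity)
    set τ₁ : ℝ := -(α i0 + σ) - ε with hτ₁def
    have hετ : ε ≤ -(α i0 + σ)/2 := min_le_left _ _
    have hτ₁ : 0 < τ₁ := by rw [hτ₁def]; linarith
    have hden0 : ∀ τ ∈ Set.Icc (0:ℝ) τ₁, α i0 + σ + τ ≤ -ε := by
      intro τ hτ; have := hτ.2; rw [hτ₁def] at this; linarith
    have hdenpos : ∀ i, i ≠ i0 → ∀ τ ∈ Set.Icc (0:ℝ) τ₁, 0 < α i + σ + τ := by
      intro i hi τ hτ; have := F4 i hi; have := hτ.1; linarith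
    have hscont : ContinuousOn s (Set.Icc 0 τ₁) := by
      rw [hsdef]
      apply continuousOn_finset_sum
      intro i _
      apply ContinuousOn.div continuousOn_const (by fun_prop)
      intro τ hτ
      by_cases hi : i = i0
      · rw [hi]; exact ne_of_lt (lt_of_le_of_lt (hden0 τ hτ) (by linarith))
      · exact ne_of_gt (hdenpos i hi τ hτ)
    have hsτ₁ : s τ₁ < y := by
      have hsplit : s τ₁ = (w i0)^2/(α i0 + σ + τ₁)
          + ∑ i ∈ Finset.univ.erase i0, (w i)^2/(α i + σ + τ₁) := by
        rw [hsdef]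
        exact (Finset.add_sum_erase _ _ (Finset.mem_univ i0)).symm
      have h1 : α i0 + σ + τ₁ = -ε := by rw [hτ₁def]; ring
      rw [h1] at hsplit
      have h2 : ∑ i ∈ Finset.univ.erase i0, (w i)^2/(α i + σ + τ₁) ≤ K := by
        rw [hKdef]
        apply Finset.sum_le_sum
        intro i hi
        have hFi := F4 i (Finset.ne_of_mem_erase hi)
        apply div_le_div_of_nonneg_left (sq_nonneg _) hFi
        linarith
      have hεle : ε ≤ W^2 / (2*(K - y + 1)) := min_le_right _ _
      have hεle2 : ε * (2*(K - y + 1)) ≤ W^2 := by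
        rw [← le_div_iff₀ (by linarith)]; exact hεle
      have h3 : (w i0)^2 / (-ε) ≤ -(2*(K - y + 1)) := by
        rw [div_neg, neg_le_neg_iff, ← hWdef]
        rw [le_div_iff₀ hε]
        linarith
      linarith [hsplit, h2, h3]
    have hy_mem : y ∈ Set.Icc (s τ₁) (s 0) := ⟨le_of_lt hsτ₁, le_of_lt hy3⟩
    obtain ⟨τs, hτmem, hτeq⟩ := intermediate_value_Icc' (le_of_lt hτ₁) hscont hy_mem
    have hτpos : 0 < τs := by
      rcases lt_or_eq_of_le hτmem.1 with h1 | h1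
      · exact h1
      · exfalso; rw [← h1] at hτeq; linarith [hτeq, hy3]
    set d : Fin n → ℝ := fun i => w i / (α i + σ + τs) with hddef
    have hden : ∀ i, α i + σ + τs ≠ 0 := by
      intro i
      by_cases hi : i = i0
      · rw [hi]; exact ne_of_lt (lt_of_le_of_lt (hden0 τs hτmem) (by linarith))
      · exact ne_of_gt (hdenpos i hi τs hτmem)
    have e3 : ∑ i, w i * d i = s τs := by
      rw [hddef, hsdef]
      exact Finset.sum_congr rfl fun i _ => by ring
    have e2 : ∑ i, (α i + σ) * (d i)^2 = s τs - τs * ∑ i, (d i)^2 := by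
      rw [hsdef, hddef, Finset.mul_sum, ← Finset.sum_sub_distrib]
      refine Finset.sum_congr rfl fun i _ => ?_
      have hi := hden i
      field_simp
      ring
    have hT : 0 ≤ ∑ i, (d i)^2 := Finset.sum_nonneg fun i _ => sq_nonneg _
    have hQ : (∑ i, (α i + σ) * (d i)^2) + (∑ i, w i * d i)^2 < 0 := by
      rw [e2, e3, hτeq]
      have hyy : y + y^2 < 0 := by nlinarith
      nlinarith [mul_nonneg (le_of_lt hτpos) hT]
    exact descent_quad α ψ ν g hg σ w hσ F1 d hQ h
  exact ⟨F1, F2, F4, F3, F5⟩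

end

set_option maxHeartbeats 1000000 in
lemma unique_aux {n : ℕ} (hn : 1 ≤ n) (α ψ : Fin n → ℝ) (hα : Monotone α) (ν : ℝ)
    (g : (Fin n → ℝ) → ℝ)
    (hg : ∀ w, g w = (1/2) * ((1/2) * ∑ i, (w i)^2 - ν)^2
        + (1/2) * ∑ i, α i * (w i)^2 - ∑ i, ψ i * w i)
    (w w' : Fin n → ℝ)
    (h : IsLocalMin g w) (h' : ¬ ∀ v, g w ≤ g v)
    (h2 : IsLocalMin g w') (h2' : ¬ ∀ v, g w' ≤ g v)
    (hle : (1/2) * ∑ i, (w i)^2 - ν ≤ (1/2) * ∑ i, (w' i)^2 - ν) : w = w' := by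
  set i0 : Fin n := ⟨0, hn⟩ with hi0
  set σ : ℝ := (1/2) * ∑ i, (w i)^2 - ν with hσ
  set σ' : ℝ := (1/2) * ∑ i, (w' i)^2 - ν with hσ'
  obtain ⟨P1, P2, P3, P4, P5⟩ := facts hn α ψ hα ν g hg w σ hσ h h'
  obtain ⟨Q1, Q2, Q3, Q4, Q5⟩ := facts hn α ψ hα ν g hg w' σ' hσ' h2 h2'
  rw [← hi0] at P2 Q2
  have P3' : ∀ i, i ≠ i0 → 0 < α i + σ := P3
  have Q3' : ∀ i, i ≠ i0 → 0 < α i + σ' := Q3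
  have hane : ∀ i, α i + σ ≠ 0 := by
    intro i; by_cases hi : i = i0
    · rw [hi]; exact ne_of_lt P2
    · exact ne_of_gt (P3' i hi)
  have hbne : ∀ i, α i + σ' ≠ 0 := by
    intro i; by_cases hi : i = i0
    · rw [hi]; exact ne_of_lt Q2
    · exact ne_of_gt (Q3' i hi)
  rcases eq_or_lt_of_le hle with heq | hlt
  · funext i
    have hPQ : (α i + σ) * w i = (α i + σ') * w' i := (P1 i).trans (Q1 i).symm
    rw [← heq] at hPQ
    exact mul_left_cancel₀ (hane i) hPQ
  · exfalso
    have hδpos : (0:ℝ) < σ' - σ := by linarith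
    have hψ0 : ψ i0 ≠ 0 := by rw [← P1 i0]; exact mul_ne_zero (ne_of_lt P2) P4
    have hA : ∑ i, (ψ i)^2 / (α i + σ)^2 = ∑ i, (w i)^2 :=
      Finset.sum_congr rfl fun i _ => by
        rw [← P1 i]; have hi := hane i; field_simp
    have hB : ∑ i, (ψ i)^2 / (α i + σ')^2 = ∑ i, (w' i)^2 :=
      Finset.sum_congr rfl fun i _ => by
        rw [← Q1 i]; have hi := hbne i; field_simp
    have hC : ∑ i, (ψ i)^2 / (α i + σ)^3 = ∑ i, (w i)^2 / (α i + σ) :=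
      Finset.sum_congr rfl fun i _ => by
        rw [← P1 i]; have hi := hane i; field_simp
    have hsums : ∑ i, (w i)^2 = 2*(σ + ν) := by rw [hσ]; ring
    have hsums' : ∑ i, (w' i)^2 = 2*(σ' + ν) := by rw [hσ']; ring
    set S : ℝ := ∑ i, (ψ i)^2 * ((1/2) * (1/(α i + σ')^2 - 1/(α i + σ)^2)
        + (σ' - σ) / (α i + σ)^3) with hS
    have hSle : S ≤ 0 := by
      have hsplit : S = (1/2) * (∑ i, (ψ i)^2/(α i + σ')^2)
          - (1/2) * (∑ i, (ψ i)^2/(α i + σ)^2)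
          + (σ' - σ) * ∑ i, (ψ i)^2/(α i + σ)^3 := by
        rw [hS, Finset.mul_sum, Finset.mul_sum, Finset.mul_sum, ← Finset.sum_sub_distrib,
          ← Finset.sum_add_distrib]
        exact Finset.sum_congr rfl fun i _ => by ring
      rw [hsplit, hA, hB, hC, hsums, hsums']
      have hmul := mul_le_mul_of_nonneg_left P5 (le_of_lt hδpos)
      linarith
    have key : ∀ i, (1/2) * (1/(α i + σ')^2 - 1/(α i + σ)^2) + (σ' - σ)/(α i + σ)^3
        = ((α i + σ) - (α i + σ'))^2 * ((α i + σ) + 2*(α i + σ'))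
          / (2 * (α i + σ)^3 * (α i + σ')^2) := by
      intro i
      have h1 := hane i; have h2 := hbne i
      field_simp
      ring
    have habd : ∀ i, (α i + σ) - (α i + σ') = -(σ' - σ) := fun i => by ring
    have hSpos : 0 < S := by
      rw [hS]
      apply Finset.sum_pos'
      · intro i _
        by_cases hi : i = i0
        · rw [hi, key i0]
          apply le_of_lt
          apply mul_pos (lt_of_le_of_ne (sq_nonneg _) (Ne.symm (pow_ne_zero 2 hψ0)))
          apply div_pos_of_neg_of_neg
          · apply mul_neg_of_pos_of_neg
            · rw [habd i0]
              exact lt_of_le_of_ne (sq_nonneg _) (Ne.symm (pow_ne_zero 2 (by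
                intro hc; rw [neg_eq_zero] at hc; linarith)))
            · linarith [P2, Q2]
          · apply mul_neg_of_neg_of_pos
            · apply mul_neg_of_pos_of_neg two_pos
              exact Odd.pow_neg (by decide) P2
            · exact Even.pow_pos (by norm_num) (hbne i0)
        · rw [key i]
          apply mul_nonneg (sq_nonneg _)
          apply div_nonneg
          · apply mul_nonneg (sq_nonneg _)
            linarith [P3' i hi, Q3' i hi]
          · have ha := P3' i hi; have hb := Q3' i hi
            positivity
      · refine ⟨i0, Finset.mem_univ i0, ?_⟩
        rw [key i0]
        apply mul_pos (lt_of_le_of_ne (sq_nonneg _) (Ne.symm (pow_ne_zero 2 hψ0)))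
        apply div_pos_of_neg_of_neg
        · apply mul_neg_of_pos_of_neg
          · rw [habd i0]
            exact lt_of_le_of_ne (sq_nonneg _) (Ne.symm (pow_ne_zero 2 (by
              intro hc; rw [neg_eq_zero] at hc; linarith)))
          · linarith [P2, Q2]
        · apply mul_neg_of_neg_of_pos
          · apply mul_neg_of_pos_of_neg two_pos
            exact Odd.pow_neg (by decide) P2
          · exact Even.pow_pos (by norm_num) (hbne i0)
    linarith

theorem stmt4 {n : ℕ} (hn : 1 ≤ n) (α ψ : Fin n → ℝ) (hα : Monotone α) (ν : ℝ)
    (g : (Fin n → ℝ) → ℝ)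
    (hg : ∀ w, g w = (1/2) * ((1/2) * ∑ i, (w i)^2 - ν)^2
        + (1/2) * ∑ i, α i * (w i)^2 - ∑ i, ψ i * w i)
    (w₁ w₂ : Fin n → ℝ)
    (h₁ : IsLocalMin g w₁) (h₁' : ¬ ∀ v, g w₁ ≤ g v)
    (h₂ : IsLocalMin g w₂) (h₂' : ¬ ∀ v, g w₂ ≤ g v) :
    w₁ = w₂ := by
  rcases le_total ((1/2) * ∑ i, (w₁ i)^2 - ν) ((1/2) * ∑ i, (w₂ i)^2 - ν) with hle | hle
  · exact unique_aux hn α ψ hα ν g hg w₁ w₂ h₁ h₁' h₂ h₂' hle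
  · exact (unique_aux hn α ψ hα ν g hg w₂ w₁ h₂ h₂' h₁ h₁' hle).symm
end

section
/- If 2ν − 2α₁ ≤ 0, where α₁ is the smallest diagonal entry of D, then g(w) = (1/2)((1/2)‖w‖² − ν)² + (1/2)wᵀDw − ψᵀw is a convex function on ℝⁿ. -/
open Finset

set_option maxHeartbeats 1000000 in
theorem stmt5 {n : ℕ} (hn : 1 ≤ n) (α ψ : Fin n → ℝ) (hα : Monotone α) (ν : ℝ)
    (hν : 2 * ν - 2 * α ⟨0, hn⟩ ≤ 0)
    (g : (Fin n → ℝ) → ℝ)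
    (hg : ∀ w, g w = (1/2) * ((1/2) * ∑ i, (w i)^2 - ν)^2
        + (1/2) * ∑ i, α i * (w i)^2 - ∑ i, ψ i * w i) :
    ConvexOn ℝ Set.univ g := by
  have hα' : ∀ i, 0 ≤ α i - ν := by
    intro i
    have h0 : (⟨0, hn⟩ : Fin n) ≤ i := by
      simp [Fin.le_def]
    have := hα h0
    linarith
  refine ⟨convex_univ, ?_⟩
  intro x _ y _ a b ha hb hab
  have hsq := (Even.convexOn_pow (even_two) (𝕜 := ℝ)).2
  have key : ∀ u v : ℝ, (a * u + b * v)^2 ≤ a * u^2 + b * v^2 := by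
    intro u v
    have := hsq (Set.mem_univ u) (Set.mem_univ v) ha hb hab
    simpa [smul_eq_mul] using this
  rw [hg, hg, hg]
  simp only [Pi.add_apply, Pi.smul_apply, smul_eq_mul]
  set Sx := ∑ i, (x i)^2 with hSxdef
  set Sy := ∑ i, (y i)^2 with hSydef
  set Sxy := ∑ i, x i * y i with hSxydef
  set Ax := ∑ i, α i * (x i)^2 with hAxdef
  set Ay := ∑ i, α i * (y i)^2 with hAydef
  set Lx := ∑ i, ψ i * x i with hLxdef
  set Ly := ∑ i, ψ i * y i with hLydef
  set Sc := ∑ i, (a * x i + b * y i)^2 with hScdef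
  set Ac := ∑ i, α i * (a * x i + b * y i)^2 with hAcdef
  set Lc := ∑ i, ψ i * (a * x i + b * y i) with hLcdef
  have hSx0 : 0 ≤ Sx := Finset.sum_nonneg fun i _ => sq_nonneg _
  have hSy0 : 0 ≤ Sy := Finset.sum_nonneg fun i _ => sq_nonneg _
  have hc : Sc = a^2*Sx + 2*a*b*Sxy + b^2*Sy := by
    have h1 : ∀ i ∈ Finset.univ (α := Fin n),
        (a * x i + b * y i)^2
          = a^2*(x i)^2 + (2*a*b)*(x i * y i) + b^2*(y i)^2 := fun i _ => by ring
    rw [hScdef, Finset.sum_congr rfl h1, Finset.sum_add_distrib, Finset.sum_add_distrib,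
      ← Finset.mul_sum, ← Finset.mul_sum, ← Finset.mul_sum]
  have hcs : 2*Sxy ≤ Sx + Sy := by
    have h0 : (0:ℝ) ≤ ∑ i, (x i - y i)^2 := Finset.sum_nonneg fun i _ => sq_nonneg _
    have h1 : ∀ i ∈ Finset.univ (α := Fin n),
        (x i - y i)^2 = (x i)^2 - (2:ℝ)*(x i * y i) + (y i)^2 := fun i _ => by ring
    rw [Finset.sum_congr rfl h1, Finset.sum_add_distrib, Finset.sum_sub_distrib,
      ← Finset.mul_sum] at h0
    linarith
  have hc0 : 0 ≤ Sc := Finset.sum_nonneg fun i _ => sq_nonneg _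
  have hcle : Sc ≤ a*Sx + b*Sy := by
    rw [hc]
    nlinarith [mul_nonneg ha hb]
  have hquart : Sc^2 ≤ a*Sx^2 + b*Sy^2 := by
    nlinarith [sq_nonneg (Sx - Sy), mul_nonneg ha hb, mul_nonneg hSx0 hSy0]
  have hx2 : ∑ i, (α i - ν) * (x i)^2 = Ax - ν*Sx := by
    rw [hAxdef, hSxdef, Finset.mul_sum, ← Finset.sum_sub_distrib]
    exact Finset.sum_congr rfl fun i _ => by ring
  have hy2 : ∑ i, (α i - ν) * (y i)^2 = Ay - ν*Sy := by
    rw [hAydef, hSydef, Finset.mul_sum, ← Finset.sum_sub_distrib]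
    exact Finset.sum_congr rfl fun i _ => by ring
  have hmix : Ac - ν*Sc ≤ a*(Ax - ν*Sx) + b*(Ay - ν*Sy) := by
    have h1 : Ac - ν*Sc = ∑ i, (α i - ν) * (a * x i + b * y i)^2 := by
      rw [hAcdef, hScdef, Finset.mul_sum, ← Finset.sum_sub_distrib]
      exact Finset.sum_congr rfl fun i _ => by ring
    have h2 : a*(Ax - ν*Sx) + b*(Ay - ν*Sy)
        = ∑ i, (a * ((α i - ν) * (x i)^2) + b * ((α i - ν) * (y i)^2)) := by
      rw [← hx2, ← hy2, Finset.mul_sum, Finset.mul_sum, ← Finset.sum_add_distrib]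
    rw [h1, h2]
    refine Finset.sum_le_sum fun i _ => ?_
    have h3 := key (x i) (y i)
    nlinarith [hα' i, h3, mul_le_mul_of_nonneg_left h3 (hα' i)]
  have hlin : Lc = a*Lx + b*Ly := by
    rw [hLcdef, hLxdef, hLydef, Finset.mul_sum, Finset.mul_sum, ← Finset.sum_add_distrib]
    exact Finset.sum_congr rfl fun i _ => by ring
  have hν2 : a*ν^2 + b*ν^2 = ν^2 := by rw [← add_mul, hab, one_mul]
  nlinarith [hquart, hmix, hlin, hν2]
end

section
/- If ψ₁ = 0 (the first component of ψ vanishes) and w̄ is a local minimizer of g(w) = (1/2)((1/2)‖w‖² − ν)² + (1/2)wᵀDw − ψᵀw, then w̄ is a global minimizer. -/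
open Finset Filter Topology

lemma aux_poly (A B C D : ℝ)
    (h : ∀ᶠ t in 𝓝 (0:ℝ), 0 ≤ A*t + B*t^2 + C*t^3 + D*t^4) :
    A = 0 ∧ 0 ≤ B := by
  have hc : ContinuousAt (fun t : ℝ => A + B*t + C*t^2 + D*t^3) 0 := by fun_prop
  have hval : (A + B*0 + C*0^2 + D*0^3) = A := by ring
  have hApos : 0 ≤ A := by
    have ht : Tendsto (fun t : ℝ => A + B*t + C*t^2 + D*t^3) (𝓝[>] 0) (𝓝 A) := by
      simpa [hval] using hc.continuousWithinAt.tendsto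
    refine ge_of_tendsto ht ?_
    filter_upwards [h.filter_mono nhdsWithin_le_nhds, self_mem_nhdsWithin] with t ht0 htpos
    have htp : (0:ℝ) < t := htpos
    nlinarith [mul_pos htp htp]
  have hAneg : A ≤ 0 := by
    have ht : Tendsto (fun t : ℝ => A + B*t + C*t^2 + D*t^3) (𝓝[<] 0) (𝓝 A) := by
      simpa [hval] using hc.continuousWithinAt.tendsto
    refine le_of_tendsto ht ?_
    filter_upwards [h.filter_mono nhdsWithin_le_nhds, self_mem_nhdsWithin] with t ht0 htneg
    have htp : t < (0:ℝ) := htneg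
    nlinarith [mul_pos (neg_pos.mpr htp) (neg_pos.mpr htp)]
  have hA : A = 0 := le_antisymm hAneg hApos
  refine ⟨hA, ?_⟩
  have hc2 : ContinuousAt (fun t : ℝ => B + C*t + D*t^2) 0 := by fun_prop
  have ht : Tendsto (fun t : ℝ => B + C*t + D*t^2) (𝓝[>] 0) (𝓝 B) := by
    have : (B + C*0 + D*0^2) = B := by ring
    simpa [this] using hc2.continuousWithinAt.tendsto
  refine ge_of_tendsto ht ?_
  filter_upwards [h.filter_mono nhdsWithin_le_nhds, self_mem_nhdsWithin] with t ht0 htpos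
  have htp : (0:ℝ) < t := htpos
  have ht0' : 0 ≤ B*t^2 + C*t^3 + D*t^4 := by nlinarith
  nlinarith [pow_pos htp 2, mul_pos (pow_pos htp 2) (pow_pos htp 2)]

lemma aux_sum_update {n : ℕ} (f : Fin n → ℝ) (i : Fin n) (x : ℝ) (h : Fin n → ℝ → ℝ) :
    ∑ j, h j (Function.update f i x j) = ∑ j, h j (f j) - h i (f i) + h i x := by
  classical
  rw [← Finset.add_sum_erase _ (fun j => h j (Function.update f i x j)) (Finset.mem_univ i),
      ← Finset.add_sum_erase _ (fun j => h j (f j)) (Finset.mem_univ i)]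
  have : ∑ j ∈ Finset.univ.erase i, h j (Function.update f i x j)
      = ∑ j ∈ Finset.univ.erase i, h j (f j) := by
    refine Finset.sum_congr rfl fun j hj => ?_
    rw [Function.update_of_ne (Finset.ne_of_mem_erase hj)]
  rw [this, Function.update_self]
  ring

lemma sum_sq_update {n : ℕ} (f : Fin n → ℝ) (i : Fin n) (x : ℝ) :
    ∑ j, (Function.update f i x j)^2 = ∑ j, (f j)^2 - (f i)^2 + x^2 := by
  simpa using aux_sum_update f i x (fun _ y => y^2)

lemma sum_mul_sq_update {n : ℕ} (c f : Fin n → ℝ) (i : Fin n) (x : ℝ) :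
    ∑ j, c j * (Function.update f i x j)^2 = ∑ j, c j * (f j)^2 - c i * (f i)^2 + c i * x^2 := by
  simpa using aux_sum_update f i x (fun j y => c j * y^2)

lemma sum_mul_update {n : ℕ} (c f : Fin n → ℝ) (i : Fin n) (x : ℝ) :
    ∑ j, c j * (Function.update f i x j) = ∑ j, c j * (f j) - c i * (f i) + c i * x := by
  simpa using aux_sum_update f i x (fun j y => c j * y)

theorem stmt7 {n : ℕ} (hn : 1 ≤ n) (α ψ : Fin n → ℝ) (hα : Monotone α) (ν : ℝ)
    (hψ : ψ ⟨0, hn⟩ = 0)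
    (g : (Fin n → ℝ) → ℝ)
    (hg : ∀ w, g w = (1/2) * ((1/2) * ∑ i, (w i)^2 - ν)^2
        + (1/2) * ∑ i, α i * (w i)^2 - ∑ i, ψ i * w i)
    (w : Fin n → ℝ) (hmin : IsLocalMin g w) :
    ∀ v : Fin n → ℝ, g w ≤ g v := by
  obtain ⟨μ, hμ⟩ : ∃ μ : ℝ, μ = (1/2) * ∑ j, (w j)^2 - ν := ⟨_, rfl⟩
  -- polynomial expansion along coordinate directions
  have hpoly : ∀ (i : Fin n) (t : ℝ), g (Function.update w i (w i + t))
      = g w + ((μ + α i) * w i - ψ i) * t + ((μ + α i + (w i)^2)/2) * t^2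
        + (w i / 2) * t^3 + (1/8) * t^4 := by
    intro i t
    rw [hg, hg, sum_sq_update, sum_mul_sq_update, sum_mul_update, hμ]
    ring
  have key : ∀ i : Fin n, (μ + α i) * w i - ψ i = 0 ∧ 0 ≤ (μ + α i + (w i)^2)/2 := by
    intro i
    have hrepr : ∀ t : ℝ, Function.update w i (w i + t) = w + t • (Pi.single i 1 : Fin n → ℝ) := by
      intro t; ext j
      by_cases h : j = i
      · subst h; simp
      · simp [Function.update_of_ne h, Pi.single_apply, h]
    have hcont : Tendsto (fun t : ℝ => Function.update w i (w i + t)) (𝓝 0) (𝓝 w) := by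
      rw [show (fun t : ℝ => Function.update w i (w i + t))
          = fun t : ℝ => w + t • (Pi.single i 1 : Fin n → ℝ) from funext hrepr]
      have hc : Continuous fun t : ℝ => w + t • (Pi.single i 1 : Fin n → ℝ) := by continuity
      simpa using hc.tendsto 0
    have hev : ∀ᶠ t in 𝓝 (0:ℝ), 0 ≤ ((μ + α i) * w i - ψ i) * t
        + ((μ + α i + (w i)^2)/2) * t^2 + (w i / 2) * t^3 + (1/8) * t^4 := by
      filter_upwards [hcont.eventually hmin] with t ht
      rw [hpoly i t] at ht
      linarith
    exact aux_poly _ _ _ _ hev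
  -- first-order conditions
  have hψ' : ∀ i, ψ i = (μ + α i) * w i := fun i => by linarith [(key i).1]
  -- nonnegativity of μ + α i
  have h0 : ∀ i, 0 ≤ μ + α i := by
    intro i
    have hi0 : (⟨0, hn⟩ : Fin n) ≤ i := by simp [Fin.le_def]
    have h1 := (key ⟨0, hn⟩).1
    have h2 := (key ⟨0, hn⟩).2
    rw [hψ] at h1
    have h3 : 0 ≤ μ + α ⟨0, hn⟩ := by
      rcases eq_or_ne (w ⟨0, hn⟩) 0 with h | h
      · rw [h] at h2; nlinarith
      · have := mul_eq_zero.mp (by linarith : (μ + α ⟨0, hn⟩) * w ⟨0, hn⟩ = 0)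
        rcases this with h' | h'
        · linarith
        · exact absurd h' h
    have := hα hi0
    linarith
  intro v
  -- exact expansion of g v - g w
  have e1 : ∑ j, (μ + α j) * (v j - w j)^2
      = μ * ∑ j, (v j)^2 - (2*μ) * ∑ j, w j * v j + μ * ∑ j, (w j)^2
        + ∑ j, α j * (v j)^2 - 2 * ∑ j, α j * (w j * v j) + ∑ j, α j * (w j)^2 := by
    rw [show (fun j => (μ + α j) * (v j - w j)^2)
        = fun j => (μ * (v j)^2 - (2*μ) * (w j * v j) + μ * (w j)^2
          + α j * (v j)^2 - 2 * (α j * (w j * v j)) + α j * (w j)^2)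
        from funext fun j => by ring]
    simp only [Finset.sum_add_distrib, Finset.sum_sub_distrib, ← Finset.mul_sum]
  have e2 : ∑ j, ψ j * v j = μ * ∑ j, w j * v j + ∑ j, α j * (w j * v j) := by
    rw [show (fun j => ψ j * v j)
        = fun j => (μ * (w j * v j) + α j * (w j * v j)) from funext fun j => by
          rw [hψ' j]; ring]
    simp only [Finset.sum_add_distrib, ← Finset.mul_sum]
  have e3 : ∑ j, ψ j * w j = μ * ∑ j, (w j)^2 + ∑ j, α j * (w j)^2 := by
    rw [show (fun j => ψ j * w j)
        = fun j => (μ * (w j)^2 + α j * (w j)^2) from funext fun j => by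
          rw [hψ' j]; ring]
    simp only [Finset.sum_add_distrib, ← Finset.mul_sum]
  have hexp : g v = g w + (1/2) * ((1/2) * ∑ j, (v j)^2 - (1/2) * ∑ j, (w j)^2)^2
      + (1/2) * ∑ j, (μ + α j) * (v j - w j)^2 := by
    rw [hg v, hg w, e1, e2, e3, hμ]
    ring
  have hsum : 0 ≤ ∑ j, (μ + α j) * (v j - w j)^2 :=
    Finset.sum_nonneg fun j _ => mul_nonneg (h0 j) (sq_nonneg _)
  nlinarith [sq_nonneg ((1/2) * ∑ j, (v j)^2 - (1/2) * ∑ j, (w j)^2)]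
end

section
/- If w* is a global minimizer of g(w) = (1/2)((1/2)‖w‖² − ν)² + (1/2)wᵀDw − ψᵀw, then ψᵢ wᵢ* ≥ 0 for every index i. -/
open Finset

theorem stmt10 {n : ℕ} (α ψ : Fin n → ℝ) (ν : ℝ)
    (g : (Fin n → ℝ) → ℝ)
    (hg : ∀ w, g w = (1/2) * ((1/2) * ∑ i, (w i)^2 - ν)^2
        + (1/2) * ∑ i, α i * (w i)^2 - ∑ i, ψ i * w i)
    (w : Fin n → ℝ) (hglob : ∀ v, g w ≤ g v) :
    ∀ i, ψ i * w i ≥ 0 := by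
  intro i
  set v : Fin n → ℝ := Function.update w i (-(w i)) with hv
  have hsq : ∀ j, (v j)^2 = (w j)^2 := by
    intro j
    by_cases h : j = i
    · subst h; simp [hv]
    · simp [hv, Function.update_of_ne h]
  have h1 : ∑ j, (v j)^2 = ∑ j, (w j)^2 := by
    exact Finset.sum_congr rfl fun j _ => hsq j
  have h2 : ∑ j, α j * (v j)^2 = ∑ j, α j * (w j)^2 := by
    exact Finset.sum_congr rfl fun j _ => by rw [hsq j]
  have h3 : ∑ j, ψ j * v j = (∑ j, ψ j * w j) - 2 * (ψ i * w i) := by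
    have : ∀ j ∈ Finset.univ, ψ j * v j =
        ψ j * w j - (if j = i then 2 * (ψ i * w i) else 0) := by
      intro j _
      by_cases h : j = i
      · subst h; simp [hv]; ring
      · simp [hv, Function.update_of_ne h, h]
    rw [Finset.sum_congr rfl this, Finset.sum_sub_distrib,
      Finset.sum_ite_eq' Finset.univ i (fun _ => 2 * (ψ i * w i))]
    simp
  have hle := hglob v
  rw [hg w, hg v, h1, h2, h3] at hle
  nlinarith [hle]
end

section
/- w* is a global minimizer of g(w) = (1/2)((1/2)‖w‖² − ν)² + (1/2)wᵀDw − ψᵀw if and only if ((1/2)‖w*‖² − ν)w* + Dw* − ψ = 0 and ‖w*‖² − 2ν + 2α₁ ≥ 0. -/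
open Finset

theorem stmt11 {n : ℕ} (hn : 1 ≤ n) (α ψ : Fin n → ℝ) (hα : Monotone α) (ν : ℝ)
    (g : (Fin n → ℝ) → ℝ)
    (hg : ∀ w, g w = (1/2) * ((1/2) * ∑ i, (w i)^2 - ν)^2
        + (1/2) * ∑ i, α i * (w i)^2 - ∑ i, ψ i * w i)
    (w : Fin n → ℝ) :
    (∀ v, g w ≤ g v) ↔
      ((∀ i, ((1/2) * ∑ j, (w j)^2 - ν) * w i + α i * w i - ψ i = 0) ∧
        (∑ j, (w j)^2) - 2 * ν + 2 * α ⟨0, hn⟩ ≥ 0) := by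
  obtain ⟨t, ht⟩ : ∃ t : ℝ, t = (1/2) * ∑ j, (w j)^2 - ν := ⟨_, rfl⟩
  obtain ⟨gr, hgr⟩ : ∃ gr : Fin n → ℝ, gr = fun i => t * w i + α i * w i - ψ i := ⟨_, rfl⟩
  have expand : ∀ v : Fin n → ℝ, g v - g w =
      (∑ i, gr i * (v i - w i)) + (1/2) * t * (∑ i, (v i - w i)^2)
      + (1/2) * ∑ i, α i * (v i - w i)^2
      + (1/2) * ((1/2) * (∑ i, (v i - w i)^2) + ∑ i, w i * (v i - w i))^2 := by
    intro v
    have h1 : ∑ i, (v i - w i)^2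
        = (∑ i, (v i)^2) - 2 * (∑ i, v i * w i) + ∑ i, (w i)^2 := by
      rw [Finset.mul_sum, ← Finset.sum_sub_distrib, ← Finset.sum_add_distrib]
      exact Finset.sum_congr rfl fun i _ => by ring
    have h2 : ∑ i, α i * (v i - w i)^2
        = (∑ i, α i * (v i)^2) - 2 * (∑ i, α i * (v i * w i)) + ∑ i, α i * (w i)^2 := by
      rw [Finset.mul_sum, ← Finset.sum_sub_distrib, ← Finset.sum_add_distrib]
      exact Finset.sum_congr rfl fun i _ => by ring
    have h3 : ∑ i, w i * (v i - w i) = (∑ i, v i * w i) - ∑ i, (w i)^2 := by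
      rw [← Finset.sum_sub_distrib]
      exact Finset.sum_congr rfl fun i _ => by ring
    have h4 : ∑ i, gr i * (v i - w i)
        = t * ((∑ i, v i * w i) - ∑ i, (w i)^2)
          + ((∑ i, α i * (v i * w i)) - ∑ i, α i * (w i)^2)
          - ((∑ i, ψ i * v i) - ∑ i, ψ i * w i) := by
      have step : ∑ i, gr i * (v i - w i)
          = ∑ i, (t * (v i * w i - (w i)^2) + (α i * (v i * w i) - α i * (w i)^2)
              - (ψ i * v i - ψ i * w i)) :=
        Finset.sum_congr rfl fun i _ => by simp only [hgr]; ring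
      rw [step, Finset.sum_sub_distrib, Finset.sum_add_distrib, ← Finset.mul_sum,
          Finset.sum_sub_distrib, Finset.sum_sub_distrib, Finset.sum_sub_distrib]
    rw [hg v, hg w, h1, h2, h3, h4, ht]
    ring
  constructor
  · intro hmin
    have hstat : ∀ i, gr i = 0 := by
      by_contra hne
      push_neg at hne
      obtain ⟨i, hi⟩ := hne
      obtain ⟨N, hN⟩ : ∃ N : ℝ, N = ∑ j, (gr j)^2 := ⟨_, rfl⟩
      have hNpos : 0 < N := by
        rw [hN]
        exact Finset.sum_pos' (fun j _ => sq_nonneg _) ⟨i, Finset.mem_univ i, by positivity⟩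
      obtain ⟨A, hA⟩ : ∃ A : ℝ, A = ∑ j, α j * (gr j)^2 := ⟨_, rfl⟩
      obtain ⟨W, hW⟩ : ∃ W : ℝ, W = ∑ j, w j * gr j := ⟨_, rfl⟩
      obtain ⟨K1, hK1⟩ : ∃ K1 : ℝ, K1 = (1/2)*t*N + (1/2)*A + (1/2)*W^2 := ⟨_, rfl⟩
      obtain ⟨K2, hK2⟩ : ∃ K2 : ℝ, K2 = (1/2)*(N*W) := ⟨_, rfl⟩
      obtain ⟨K3, hK3⟩ : ∃ K3 : ℝ, K3 = (1/8)*N^2 := ⟨_, rfl⟩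
      obtain ⟨M, hM⟩ : ∃ M : ℝ, M = |K1| + |K2| + |K3| + 1 := ⟨_, rfl⟩
      have hMpos : 0 < M := by
        rw [hM]; positivity
      obtain ⟨ε, hε⟩ : ∃ ε : ℝ, ε = min 1 (N / (2*M)) := ⟨_, rfl⟩
      have hε0 : 0 < ε := by
        rw [hε]; exact lt_min one_pos (by positivity)
      have hε1 : ε ≤ 1 := by rw [hε]; exact min_le_left _ _
      have hε2 : ε ≤ N/(2*M) := by rw [hε]; exact min_le_right _ _
      have e1 : ∑ j, gr j * ((w j - ε * gr j) - w j) = -(ε * N) := by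
        rw [hN, Finset.mul_sum, ← Finset.sum_neg_distrib]
        exact Finset.sum_congr rfl fun j _ => by ring
      have e2 : ∑ j, ((w j - ε * gr j) - w j)^2 = ε^2 * N := by
        rw [hN, Finset.mul_sum]
        exact Finset.sum_congr rfl fun j _ => by ring
      have e3 : ∑ j, α j * ((w j - ε * gr j) - w j)^2 = ε^2 * A := by
        rw [hA, Finset.mul_sum]
        exact Finset.sum_congr rfl fun j _ => by ring
      have e4 : ∑ j, w j * ((w j - ε * gr j) - w j) = -(ε * W) := by
        rw [hW, Finset.mul_sum, ← Finset.sum_neg_distrib]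
        exact Finset.sum_congr rfl fun j _ => by ring
      have hF := expand (fun j => w j - ε * gr j)
      rw [e1, e2, e3, e4] at hF
      have hFval : g (fun j => w j - ε * gr j) - g w
          = -(ε*N) + ε^2*K1 - ε^3*K2 + ε^4*K3 := by
        rw [hF, hK1, hK2, hK3]; ring
      have hle : (0:ℝ) ≤ g (fun j => w j - ε * gr j) - g w := by
        linarith [hmin (fun j => w j - ε * gr j)]
      have b1 : K1 ≤ |K1| := le_abs_self _
      have b2 : -K2 ≤ |K2| := neg_le_abs _
      have b3 : K3 ≤ |K3| := le_abs_self _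
      have hεM : ε * M ≤ N/2 := by
        have h' : N/(2*M)*M = N/2 := by field_simp
        calc ε * M ≤ (N/(2*M)) * M := mul_le_mul_of_nonneg_right hε2 hMpos.le
        _ = N/2 := h'
      have p3 : ε^3 ≤ ε^2 := by
        have h := mul_le_mul_of_nonneg_left hε1 (sq_nonneg ε)
        calc ε^3 = ε^2 * ε := by ring
        _ ≤ ε^2 * 1 := h
        _ = ε^2 := mul_one _
      have p4 : ε^4 ≤ ε^2 := by
        have h := mul_le_mul_of_nonneg_left hε1 (pow_nonneg hε0.le 3)
        calc ε^4 = ε^3 * ε := by ring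
        _ ≤ ε^3 * 1 := h
        _ = ε^3 := mul_one _
        _ ≤ ε^2 := p3
      have habs : ε^2*K1 - ε^3*K2 + ε^4*K3 ≤ ε^2 * M - ε^2 := by
        have q1 : ε^2*K1 ≤ ε^2*|K1| := mul_le_mul_of_nonneg_left b1 (sq_nonneg ε)
        have q2 : -(ε^3*K2) ≤ ε^2*|K2| := by
          have h1 : ε^3*(-K2) ≤ ε^3*|K2| := mul_le_mul_of_nonneg_left b2 (pow_nonneg hε0.le 3)
          have h2 : ε^3*|K2| ≤ ε^2*|K2| := mul_le_mul_of_nonneg_right p3 (abs_nonneg K2)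
          calc -(ε^3*K2) = ε^3*(-K2) := by ring
          _ ≤ ε^3*|K2| := h1
          _ ≤ ε^2*|K2| := h2
        have q3 : ε^4*K3 ≤ ε^2*|K3| := by
          have h1 : ε^4*K3 ≤ ε^4*|K3| := mul_le_mul_of_nonneg_left b3 (pow_nonneg hε0.le 4)
          have h2 : ε^4*|K3| ≤ ε^2*|K3| := mul_le_mul_of_nonneg_right p4 (abs_nonneg K3)
          exact le_trans h1 h2
        have hM' : ε^2*(|K1|+|K2|+|K3|) = ε^2*M - ε^2 := by rw [hM]; ring
        linarith only [q1, q2, q3, hM']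
      have hfin : ε^2 * M ≤ ε * (N/2) := by
        have h := mul_le_mul_of_nonneg_left hεM hε0.le
        calc ε^2 * M = ε * (ε * M) := by ring
        _ ≤ ε * (N/2) := h
      linarith only [hle, hFval, habs, hfin, mul_pos hε0 hNpos, sq_nonneg ε]
    refine ⟨fun i => by simpa [hgr, ht] using hstat i, ?_⟩
    by_contra hc
    push_neg at hc
    obtain ⟨c, hcdef⟩ : ∃ c : ℝ, c = -(t + α ⟨0, hn⟩) := ⟨_, rfl⟩
    have hcpos : 0 < c := by
      rw [hcdef, ht]; linarith
    obtain ⟨r, hr⟩ : ∃ r : ℝ, r = Real.sqrt c := ⟨_, rfl⟩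
    have hr2 : r^2 = c := by rw [hr]; exact Real.sq_sqrt hcpos.le
    have hrpos : 0 < r := by rw [hr]; exact Real.sqrt_pos.mpr hcpos
    have hkey : ∃ ε : ℝ, ε ≠ 0 ∧ ((1/2)*ε + w ⟨0, hn⟩)^2 = c/4 := by
      by_cases hone : -2 * w ⟨0, hn⟩ + r = 0
      · refine ⟨-2 * w ⟨0, hn⟩ - r, fun h => by linarith, ?_⟩
        have h' : (1/2)*(-2 * w ⟨0, hn⟩ - r) + w ⟨0, hn⟩ = -(1/2)*r := by ring
        rw [h']
        linear_combination (1/4) * hr2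
      · refine ⟨-2 * w ⟨0, hn⟩ + r, hone, ?_⟩
        have h' : (1/2)*(-2 * w ⟨0, hn⟩ + r) + w ⟨0, hn⟩ = (1/2)*r := by ring
        rw [h']
        linear_combination (1/4) * hr2
    obtain ⟨ε, hεne, hsq⟩ := hkey
    have e1 : ∑ j, gr j * ((w j + if j = (⟨0, hn⟩ : Fin n) then ε else 0) - w j) = 0 :=
      Finset.sum_eq_zero fun j _ => by rw [hstat j, zero_mul]
    have e2 : ∑ j, ((w j + if j = (⟨0, hn⟩ : Fin n) then ε else 0) - w j)^2 = ε^2 := by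
      have step : ∀ j : Fin n, ((w j + if j = (⟨0, hn⟩ : Fin n) then ε else 0) - w j)^2
          = if j = (⟨0, hn⟩ : Fin n) then ε^2 else 0 := fun j => by split_ifs <;> ring
      rw [Finset.sum_congr rfl fun j _ => step j]
      simp
    have e3 : ∑ j, α j * ((w j + if j = (⟨0, hn⟩ : Fin n) then ε else 0) - w j)^2
        = α ⟨0, hn⟩ * ε^2 := by
      have step : ∀ j : Fin n, α j * ((w j + if j = (⟨0, hn⟩ : Fin n) then ε else 0) - w j)^2
          = if j = (⟨0, hn⟩ : Fin n) then α j * ε^2 else 0 := fun j => by split_ifs <;> ring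
      rw [Finset.sum_congr rfl fun j _ => step j]
      simp
    have e4 : ∑ j, w j * ((w j + if j = (⟨0, hn⟩ : Fin n) then ε else 0) - w j)
        = w ⟨0, hn⟩ * ε := by
      have step : ∀ j : Fin n, w j * ((w j + if j = (⟨0, hn⟩ : Fin n) then ε else 0) - w j)
          = if j = (⟨0, hn⟩ : Fin n) then w j * ε else 0 := fun j => by split_ifs <;> ring
      rw [Finset.sum_congr rfl fun j _ => step j]
      simp
    have hF := expand (fun j => w j + if j = (⟨0, hn⟩ : Fin n) then ε else 0)
    rw [e1, e2, e3, e4] at hF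
    have hle : (0:ℝ) ≤ g (fun j => w j + if j = (⟨0, hn⟩ : Fin n) then ε else 0) - g w := by
      linarith [hmin (fun j => w j + if j = (⟨0, hn⟩ : Fin n) then ε else 0)]
    have hε2pos : 0 < ε^2 := lt_of_le_of_ne (sq_nonneg ε) (Ne.symm (pow_ne_zero 2 hεne))
    have hq : ((1/2)*ε^2 + w ⟨0, hn⟩ * ε)^2 = ε^2 * (c/4) := by
      have h' : (1/2)*ε^2 + w ⟨0, hn⟩ * ε = ε * ((1/2)*ε + w ⟨0, hn⟩) := by ring
      rw [h', mul_pow, hsq]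
    have hta : t + α ⟨0, hn⟩ = -c := by rw [hcdef]; ring
    rw [hq] at hF
    have hval : (1/2)*t*ε^2 + (1/2)*(α ⟨0, hn⟩ * ε^2) + (1/2)*(ε^2*(c/4))
        = -(3/8)*(ε^2*c) := by linear_combination (ε^2/2) * hta
    linarith only [hle, hF, hval, mul_pos hε2pos hcpos]
  · rintro ⟨hstat, hpos⟩ v
    have hzero : ∀ i, gr i = 0 := fun i => by
      simp only [hgr]
      rw [ht]
      exact hstat i
    have hF := expand v
    have hsum1 : ∑ i, gr i * (v i - w i) = 0 :=
      Finset.sum_eq_zero fun i _ => by rw [hzero i, zero_mul]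
    have hta : ∀ i : Fin n, 0 ≤ t + α i := by
      intro i
      have h0 : (⟨0, hn⟩ : Fin n) ≤ i := by simp [Fin.le_def]
      have h1 := hα h0
      have ht0 : 0 ≤ t + α ⟨0, hn⟩ := by rw [ht]; linarith
      linarith
    have hsplit : ∑ i, (t + α i) * (v i - w i)^2
        = t * (∑ i, (v i - w i)^2) + ∑ i, α i * (v i - w i)^2 := by
      rw [Finset.mul_sum, ← Finset.sum_add_distrib]
      exact Finset.sum_congr rfl fun i _ => by ring
    have hnn : 0 ≤ ∑ i, (t + α i) * (v i - w i)^2 :=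
      Finset.sum_nonneg fun i _ => mul_nonneg (hta i) (sq_nonneg _)
    rw [hsum1] at hF
    linarith only [hF, hsplit, hnn,
      sq_nonneg ((1/2) * (∑ i, (v i - w i)^2) + ∑ i, w i * (v i - w i))]
end

section
/- If w̲ is a local non-global minimizer and w* is a global minimizer of g, then ψ₁ ≠ 0 and sign(ψ₁) = sign(w₁*) = −sign(w̲₁); in particular the first components of w̲ and w* are nonzero with opposite signs. -/
open Finset Function

-- sum splitting
lemma upd_sum {n : ℕ} (w : Fin n → ℝ) (i : Fin n) (F : Fin n → ℝ → ℝ) (x : ℝ) :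
    ∑ j, F j (update w i x j) = F i x + ∑ j ∈ univ.erase i, F j (w j) := by
  rw [← Finset.add_sum_erase _ _ (mem_univ i)]
  congr 1
  · simp
  · exact Finset.sum_congr rfl fun j hj => by
      rw [update_of_ne (Finset.ne_of_mem_erase hj)]

lemma slice_min {n : ℕ} (g : (Fin n → ℝ) → ℝ) (w : Fin n → ℝ) (i : Fin n)
    (h : IsLocalMin g w) : IsLocalMin (fun x => g (update w i x)) (w i) := by
  have hc : Continuous (fun x : ℝ => update w i x) := continuous_const.update i continuous_id
  have : IsMinFilter g (nhds (update w i (w i))) (update w i (w i)) := by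
    simpa [update_eq_self] using (show IsMinFilter g (nhds w) w from h)
  exact this.comp_tendsto (by simpa [ContinuousAt, update_eq_self] using hc.continuousAt (x := w i))

lemma stationary {n : ℕ} (α ψ : Fin n → ℝ) (ν : ℝ) (g : (Fin n → ℝ) → ℝ)
    (hg : ∀ w, g w = (1/2) * ((1/2) * ∑ i, (w i)^2 - ν)^2
        + (1/2) * ∑ i, α i * (w i)^2 - ∑ i, ψ i * w i)
    (w : Fin n → ℝ) (h : IsLocalMin g w) (i : Fin n) :
    ((1/2) * ∑ j, (w j)^2 - ν + α i) * w i = ψ i := by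
  have hm := slice_min g w i h
  set Cs := ∑ j ∈ univ.erase i, (w j)^2 with hCs
  set Ca := ∑ j ∈ univ.erase i, α j * (w j)^2 with hCa
  set Cp := ∑ j ∈ univ.erase i, ψ j * (w j) with hCp
  have hφ : (fun x => g (update w i x)) = fun x =>
      (1/2)*((1/2)*(x^2 + Cs) - ν)^2 + (1/2)*(α i * x^2 + Ca) - (ψ i * x + Cp) := by
    funext x
    rw [hg, upd_sum w i (fun j y => y^2) x, upd_sum w i (fun j y => α j * y^2) x,
      upd_sum w i (fun j y => ψ j * y) x]
  rw [hφ] at hm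
  have h2 : HasDerivAt (fun x : ℝ => x^2) (2 * w i) (w i) := by
    simpa using hasDerivAt_pow 2 (w i)
  have h3 := ((h2.add_const Cs).const_mul ((1:ℝ)/2)).sub_const ν
  have h4 := h3.fun_pow 2
  have h5 := ((h4.const_mul ((1:ℝ)/2)).fun_add
      (((h2.const_mul (α i)).add_const Ca).const_mul ((1:ℝ)/2))).fun_sub
      (((hasDerivAt_id (w i)).const_mul (ψ i)).add_const Cp)
  have hd : HasDerivAt (fun x : ℝ =>
      (1/2)*((1/2)*(x^2 + Cs) - ν)^2 + (1/2)*(α i * x^2 + Ca) - (ψ i * x + Cp))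
      (((1/2)*((w i)^2 + Cs) - ν + α i) * w i - ψ i) (w i) := by
    refine h5.congr_deriv ?_
    norm_num
    ring
  have h0 := hm.hasDerivAt_eq_zero hd
  have hS : ∑ j, (w j)^2 = (w i)^2 + Cs := by
    have h := upd_sum w i (fun j y => y^2) (w i)
    rw [update_eq_self] at h
    exact h
  rw [hS]
  linarith [h0]

lemma key_id {n : ℕ} (α ψ : Fin n → ℝ) (ν : ℝ) (g : (Fin n → ℝ) → ℝ)
    (hg : ∀ w, g w = (1/2) * ((1/2) * ∑ i, (w i)^2 - ν)^2
        + (1/2) * ∑ i, α i * (w i)^2 - ∑ i, ψ i * w i)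
    (w : Fin n → ℝ)
    (hstat : ∀ i, ((1/2) * ∑ j, (w j)^2 - ν + α i) * w i = ψ i) (v : Fin n → ℝ) :
    g v = g w
      + (1/2) * ∑ i, ((1/2) * ∑ j, (w j)^2 - ν + α i) * (v i - w i)^2
      + (1/2) * ((1/2) * ∑ i, (v i)^2 - (1/2) * ∑ i, (w i)^2)^2 := by
  set L : ℝ := (1/2) * ∑ j, (w j)^2 - ν with hL
  have hψv : ∑ i, ψ i * v i = L * ∑ i, w i * v i + ∑ i, α i * (w i * v i) := by
    rw [Finset.mul_sum, ← Finset.sum_add_distrib]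
    exact Finset.sum_congr rfl fun i _ => by rw [← hstat i]; ring
  have hψw : ∑ i, ψ i * w i = L * ∑ i, (w i)^2 + ∑ i, α i * (w i)^2 := by
    rw [Finset.mul_sum, ← Finset.sum_add_distrib]
    exact Finset.sum_congr rfl fun i _ => by rw [← hstat i]; ring
  have hq : ∑ i, (L + α i) * (v i - w i)^2
      = (L * ∑ i, (v i)^2 - 2*(L * ∑ i, w i * v i) + L * ∑ i, (w i)^2)
        + (∑ i, α i * (v i)^2 - 2*(∑ i, α i * (w i * v i)) + ∑ i, α i * (w i)^2) := by
    simp only [Finset.mul_sum, ← Finset.sum_add_distrib, ← Finset.sum_sub_distrib]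
    exact Finset.sum_congr rfl fun i _ => by ring
  rw [hg v, hg w, hψv, hψw, hq]
  ring

lemma sign_const_mul (c x : ℝ) (hc : 0 < c) : Real.sign (c * x) = Real.sign x := by
  rcases lt_trichotomy x 0 with h|h|h
  · rw [Real.sign_of_neg h, Real.sign_of_neg (mul_neg_of_pos_of_neg hc h)]
  · simp [h]
  · rw [Real.sign_of_pos h, Real.sign_of_pos (mul_pos hc h)]

theorem stmt12 {n : ℕ} (hn : 1 ≤ n) (α ψ : Fin n → ℝ) (hα : Monotone α) (ν : ℝ)
    (g : (Fin n → ℝ) → ℝ)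
    (hg : ∀ w, g w = (1/2) * ((1/2) * ∑ i, (w i)^2 - ν)^2
        + (1/2) * ∑ i, α i * (w i)^2 - ∑ i, ψ i * w i)
    (wl ws : Fin n → ℝ)
    (hl : IsLocalMin g wl) (hl' : ¬ ∀ v, g wl ≤ g v)
    (hs : ∀ v, g ws ≤ g v) :
    ψ ⟨0, hn⟩ ≠ 0 ∧ ws ⟨0, hn⟩ ≠ 0 ∧ wl ⟨0, hn⟩ ≠ 0 ∧
    Real.sign (ψ ⟨0, hn⟩) = Real.sign (ws ⟨0, hn⟩) ∧
    Real.sign (ws ⟨0, hn⟩) = - Real.sign (wl ⟨0, hn⟩) := by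
  set i0 : Fin n := ⟨0, hn⟩ with hi0
  have hi0le : ∀ i : Fin n, i0 ≤ i := fun i => Fin.le_def.mpr (Nat.zero_le _)
  have hlmin_s : IsLocalMin g ws := Filter.Eventually.of_forall (fun v => hs v)
  have hstat_l := stationary α ψ ν g hg wl hl
  have hstat_s := stationary α ψ ν g hg ws hlmin_s
  -- Step A : Ll + α i0 < 0
  have hA : (1/2) * ∑ j, (wl j)^2 - ν + α i0 < 0 := by
    by_contra hcon
    push_neg at hcon
    apply hl'
    intro v
    rw [key_id α ψ ν g hg wl hstat_l v]
    have h1 : (0:ℝ) ≤ ∑ i, ((1/2) * ∑ j, (wl j)^2 - ν + α i) * (v i - wl i)^2 := by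
      apply Finset.sum_nonneg
      intro i _
      apply mul_nonneg _ (sq_nonneg _)
      have : α i0 ≤ α i := hα (hi0le i)
      linarith
    nlinarith [sq_nonneg ((1/2) * ∑ i, (v i)^2 - (1/2) * ∑ i, (wl i)^2)]
  -- Step B : ψ i0 ≠ 0
  have hψ : ψ i0 ≠ 0 := by
    intro h0
    have hwl1 : wl i0 = 0 := by
      have := hstat_l i0
      rw [h0] at this
      rcases mul_eq_zero.1 this with h|h
      · exact absurd h (ne_of_lt hA)
      · exact h
    have hm := slice_min g wl i0 hl
    rw [hwl1] at hm
    rcases Metric.eventually_nhds_iff.1 hm with ⟨ε, hε, hball⟩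
    set c : ℝ := (1/2) * ∑ j, (wl j)^2 - ν + α i0 with hc
    set t : ℝ := min (ε/2) (Real.sqrt (-c)) with ht
    have hcneg : c < 0 := hA
    have htpos : 0 < t := lt_min (by linarith) (Real.sqrt_pos.mpr (by linarith))
    have ht2 : t^2 ≤ -c := by
      have h1 : t ≤ Real.sqrt (-c) := min_le_right _ _
      have := Real.sq_sqrt (show (0:ℝ) ≤ -c by linarith)
      nlinarith
    have htε : dist t (0:ℝ) < ε := by
      rw [Real.dist_eq, sub_zero, abs_of_pos htpos]
      calc t ≤ ε/2 := min_le_left _ _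
        _ < ε := by linarith
    have hineq := hball htε
    simp only [Function.update_self] at hineq
    -- hineq : g (update wl i0 0) ≤ g (update wl i0 t)  (with update wl i0 0 = wl)
    have hupd0 : Function.update wl i0 (0:ℝ) = wl := by
      rw [← hwl1, Function.update_eq_self]
    rw [hupd0] at hineq
    have hsum1 : ∑ i, ((1/2) * ∑ j, (wl j)^2 - ν + α i) * (Function.update wl i0 t i - wl i)^2
        = c * t^2 := by
      rw [Finset.sum_eq_single i0]
      · rw [Function.update_self, hwl1, sub_zero, hc]
      · intro j _ hj
        rw [Function.update_of_ne hj, sub_self]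
        ring
      · intro h; exact absurd (Finset.mem_univ i0) h
    have hsum2 : ∑ i, (Function.update wl i0 t i)^2 = t^2 + ∑ i, (wl i)^2 := by
      have h1 := upd_sum wl i0 (fun j y => y^2) t
      have h2 := upd_sum wl i0 (fun j y => y^2) (wl i0)
      rw [Function.update_eq_self] at h2
      rw [h1, h2, hwl1]
      ring
    have hval := key_id α ψ ν g hg wl hstat_l (Function.update wl i0 t)
    rw [hsum1, hsum2] at hval
    rw [hval] at hineq
    have ht2pos : 0 < t^2 := by positivity
    have e : (1:ℝ)/2 * (t^2 + ∑ i, (wl i)^2) - 1/2 * ∑ i, (wl i)^2 = t^2/2 := by ring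
    rw [e] at hineq
    have h4 : t^2*t^2 ≤ t^2*(-c) := mul_le_mul_of_nonneg_left ht2 (le_of_lt ht2pos)
    have h5 : (0:ℝ) < t^2*(-c) := mul_pos ht2pos (neg_pos.mpr hcneg)
    clear_value t c
    linarith [hineq, h4, h5]
  -- Step C : ws i0 ≠ 0 and Ls + α i0 ≠ 0
  have hCs : ((1/2) * ∑ j, (ws j)^2 - ν + α i0) * ws i0 = ψ i0 := hstat_s i0
  have hws1 : ws i0 ≠ 0 := by
    intro h
    rw [h, mul_zero] at hCs
    exact hψ hCs.symm
  have hLs0 : (1/2) * ∑ j, (ws j)^2 - ν + α i0 ≠ 0 := by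
    intro h
    rw [h, zero_mul] at hCs
    exact hψ hCs.symm
  -- Step D : Ls + α i0 > 0
  have hD : 0 < (1/2) * ∑ j, (ws j)^2 - ν + α i0 := by
    rcases lt_or_gt_of_ne hLs0 with hneg | hpos
    · exfalso
      set v : Fin n → ℝ := Function.update ws i0 (-(ws i0)) with hv
      have hv2 : ∑ i, (v i)^2 = ∑ i, (ws i)^2 := by
        rw [hv, upd_sum ws i0 (fun j y => y^2) _]
        have h2 := upd_sum ws i0 (fun j y => y^2) (ws i0)
        rw [Function.update_eq_self] at h2
        rw [h2]
        ring
      have hvsum : ∑ i, ((1/2) * ∑ j, (ws j)^2 - ν + α i) * (v i - ws i)^2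
          = ((1/2) * ∑ j, (ws j)^2 - ν + α i0) * (-(ws i0) - ws i0)^2 := by
        rw [hv, Finset.sum_eq_single i0]
        · rw [Function.update_self]
        · intro j _ hj
          rw [Function.update_of_ne hj, sub_self]
          ring
        · intro h; exact absurd (Finset.mem_univ i0) h
      have hval := key_id α ψ ν g hg ws hstat_s v
      rw [hvsum, hv2] at hval
      have := hs v
      have hb : -(ws i0) - ws i0 ≠ 0 := by
        intro h
        apply hws1
        linarith
      have hsq : 0 < (-(ws i0) - ws i0)^2 :=
        lt_of_le_of_ne (sq_nonneg _) (Ne.symm (pow_ne_zero 2 hb))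
      nlinarith
    · exact hpos
  -- signs
  have hwl0 : wl i0 ≠ 0 := by
    intro h
    apply hψ
    rw [← hstat_l i0, h, mul_zero]
  refine ⟨hψ, hws1, hwl0, ?_, ?_⟩
  · rw [← hCs, sign_const_mul _ _ hD]
  · have hlstat : ψ i0 = -((-((1/2) * ∑ j, (wl j)^2 - ν + α i0)) * wl i0) := by
      rw [← hstat_l i0]
      ring
    have e1 : Real.sign (ws i0) = Real.sign (ψ i0) := by
      rw [← hCs, sign_const_mul _ _ hD]
    have e2 : Real.sign (ψ i0) = - Real.sign (wl i0) := by
      rw [hlstat, Real.sign_neg,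
        sign_const_mul _ _ (by linarith : (0:ℝ) < -((1/2) * ∑ j, (wl j)^2 - ν + α i0))]
    rw [e1, e2]
end

section
/- If w̄ is a local maximizer of g(w) = (1/2)((1/2)‖w‖² − ν)² + (1/2)wᵀDw − ψᵀw, then for each index i, ψᵢ = 0 if and only if w̄ᵢ = 0. -/
open Finset

open Topology Filter

theorem stmt13 {n : ℕ} (α ψ : Fin n → ℝ) (hα : Monotone α) (ν : ℝ)
    (g : (Fin n → ℝ) → ℝ)
    (hg : ∀ w, g w = (1/2) * ((1/2) * ∑ i, (w i)^2 - ν)^2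
        + (1/2) * ∑ i, α i * (w i)^2 - ∑ i, ψ i * w i)
    (w : Fin n → ℝ) (hmax : IsLocalMax g w) :
    ∀ i, ψ i = 0 ↔ w i = 0 := by
  intro i
  set Sr := ∑ j ∈ univ \ {i}, (w j)^2 with hSr
  set Ar := ∑ j ∈ univ \ {i}, α j * (w j)^2 with hAr
  set Pr := ∑ j ∈ univ \ {i}, ψ j * w j with hPr
  set Φ : ℝ → ℝ := fun t => (1/2) * ((1/2) * (t^2 + Sr) - ν)^2
      + (1/2) * (α i * t^2 + Ar) - (ψ i * t + Pr) with hΦdef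
  have e1 : ∀ t : ℝ, (∑ j, (Function.update w i t j)^2) = t^2 + Sr := by
    intro t
    rw [Finset.sum_congr rfl fun j _ =>
      Function.apply_update (fun _ x => x^2) w i t j]
    rw [Finset.sum_update_of_mem (mem_univ i)]
  have e2 : ∀ t : ℝ, (∑ j, α j * (Function.update w i t j)^2) = α i * t^2 + Ar := by
    intro t
    rw [Finset.sum_congr rfl fun j _ =>
      Function.apply_update (fun j x => α j * x^2) w i t j]
    rw [Finset.sum_update_of_mem (mem_univ i)]
  have e3 : ∀ t : ℝ, (∑ j, ψ j * Function.update w i t j) = ψ i * t + Pr := by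
    intro t
    rw [Finset.sum_congr rfl fun j _ =>
      Function.apply_update (fun j x => ψ j * x) w i t j]
    rw [Finset.sum_update_of_mem (mem_univ i)]
  have hline : IsLocalMax Φ (w i) := by
    have hc : Continuous (fun t : ℝ => Function.update w i t) :=
      continuous_const.update i continuous_id
    have h1 : IsLocalMax (g ∘ fun t : ℝ => Function.update w i t) (w i) := by
      have h0 := hmax
      rw [← Function.update_eq_self i w] at h0
      exact h0.comp_continuous hc.continuousAt
    have heq : (g ∘ fun t : ℝ => Function.update w i t) = Φ := by
      funext t
      simp only [Function.comp_apply, hg, hΦdef, e1 t, e2 t, e3 t]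
    rwa [heq] at h1
  -- derivative of Φ at w i
  have hsq : HasDerivAt (fun t : ℝ => t^2) (2 * w i) (w i) := by
    simpa using hasDerivAt_pow 2 (w i)
  have h1 : HasDerivAt (fun t : ℝ => (1/2) * (t^2 + Sr) - ν) (w i) (w i) := by
    have h := ((hsq.add_const Sr).const_mul (1/2 : ℝ)).sub_const ν
    exact h.congr_deriv (by ring)
  have h2 : HasDerivAt (fun t : ℝ => (1/2) * ((1/2) * (t^2 + Sr) - ν)^2)
      (((1/2) * ((w i)^2 + Sr) - ν) * w i) (w i) := by
    have h := (h1.pow 2).const_mul (1/2 : ℝ)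
    exact h.congr_deriv (by ring)
  have h3 : HasDerivAt (fun t : ℝ => (1/2) * (α i * t^2 + Ar)) (α i * w i) (w i) := by
    have h := ((hsq.const_mul (α i)).add_const Ar).const_mul (1/2 : ℝ)
    exact h.congr_deriv (by ring)
  have h4 : HasDerivAt (fun t : ℝ => ψ i * t + Pr) (ψ i) (w i) := by
    simpa using ((hasDerivAt_id (w i)).const_mul (ψ i)).add_const Pr
  have hΦd : HasDerivAt Φ
      ((((1/2) * ((w i)^2 + Sr) - ν) * w i + α i * w i) - ψ i) (w i) := by
    rw [hΦdef]
    exact (h2.add h3).sub h4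
  have hd0 : (((1/2) * ((w i)^2 + Sr) - ν) * w i + α i * w i) - ψ i = 0 := by
    have h := hline.deriv_eq_zero
    rwa [hΦd.deriv] at h
  have hkey : ((1/2) * ((w i)^2 + Sr) - ν + α i) * w i = ψ i := by
    linear_combination hd0
  constructor
  · intro hψ
    by_contra hw
    have hlam : (1/2) * ((w i)^2 + Sr) - ν + α i = 0 := by
      rw [hψ] at hkey
      rcases mul_eq_zero.mp hkey with h | h
      · exact h
      · exact absurd h hw
    have hdiff : ∀ t, Φ t = Φ (w i) + (t^2 - (w i)^2)^2 / 8 := by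
      intro t
      simp only [hΦdef, hψ]
      linear_combination ((t^2 - (w i)^2) / 2) * hlam
    have hne : (w i : ℝ) ≠ -(w i) := fun h => hw (by linarith)
    obtain ⟨t, ⟨ht1, ht2⟩, ht3⟩ : ∃ t, (Φ t ≤ Φ (w i) ∧ t ≠ w i) ∧ t ≠ -(w i) := by
      have hp1 : ∀ᶠ t in 𝓝[≠] (w i), Φ t ≤ Φ (w i) :=
        hline.filter_mono nhdsWithin_le_nhds
      have hp2 : ∀ᶠ t in 𝓝[≠] (w i), t ≠ w i := self_mem_nhdsWithin
      have hp3' : ∀ᶠ t in 𝓝 (w i), t ≠ -(w i) := isOpen_ne.eventually_mem hne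
      have hp3 : ∀ᶠ t in 𝓝[≠] (w i), t ≠ -(w i) := hp3'.filter_mono nhdsWithin_le_nhds
      exact ((hp1.and hp2).and hp3).exists
    have hne2 : t^2 - (w i)^2 ≠ 0 := by
      intro h
      have h' : (t - w i) * (t + w i) = 0 := by linear_combination h
      rcases mul_eq_zero.mp h' with h'' | h''
      · exact ht2 (by linarith)
      · exact ht3 (by linarith)
    have hpos : 0 < (t^2 - (w i)^2)^2 := by positivity
    have hdt := hdiff t
    rw [hdt] at ht1
    linarith
  · intro hw
    rw [hw, mul_zero] at hkey
    exact hkey.symm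
end

section
/- If ν − αₙ ≤ 0, where αₙ is the largest diagonal entry of D, then g(w) = (1/2)((1/2)‖w‖² − ν)² + (1/2)wᵀDw − ψᵀw has no local maximizer. -/
open Finset

lemma quartic_key (a b c ε : ℝ) (hb : 0 ≤ b) (hbc : c^2 ≤ b) (hε : 0 < ε)
    (h : ∀ t : ℝ, |t| < ε → a*t + b*t^2 + c*t^3 + t^4/8 ≤ 0) : False := by
  by_cases ha : a = 0
  · subst ha
    by_cases hb0 : b = 0
    · subst hb0
      have hc : c = 0 := by nlinarith [sq_nonneg c]
      subst hc
      have ht : |ε/2| < ε := by rw [abs_of_pos (by linarith)]; linarith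
      have := h (ε/2) ht
      nlinarith [pow_pos (show (0:ℝ) < ε/2 by linarith) 4]
    · have hbpos : 0 < b := lt_of_le_of_ne hb (Ne.symm hb0)
      set t := min (ε/2) (min 1 (b/(2*(|c|+1)))) with htdef
      have hcpos : 0 < |c| + 1 := by positivity
      have h1 : 0 < t := by
        apply lt_min (by linarith)
        exact lt_min one_pos (by positivity)
      have h2 : t ≤ ε/2 := min_le_left _ _
      have h4 : t ≤ b/(2*(|c|+1)) := le_trans (min_le_right _ _) (min_le_right _ _)
      have ht : |t| < ε := by rw [abs_of_pos h1]; linarith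
      have := h t ht
      have h4' : t * (2*(|c|+1)) ≤ b := (le_div_iff₀ (by positivity)).mp h4
      have hct : (|c|+1) * t ≤ b/2 := by nlinarith
      have hcc : -|c| ≤ c := neg_abs_le c
      have e1 : -|c| * t^3 ≤ c * t^3 := mul_le_mul_of_nonneg_right hcc (by positivity)
      have e3 : (|c|+1)*t*t^2 ≤ (b/2)*t^2 := mul_le_mul_of_nonneg_right hct (sq_nonneg t)
      nlinarith [mul_pos (half_pos hbpos) (mul_pos h1 h1), pow_pos h1 4, pow_pos h1 3,
        abs_nonneg c]
  · have hcpos : 0 < |c| + 1 := by positivity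
    have hapos : 0 < |a| := abs_pos.mpr ha
    set δ := min (ε/2) (min 1 (|a|/(2*(|c|+1)))) with hδdef
    have h1 : 0 < δ := by
      apply lt_min (by linarith)
      exact lt_min one_pos (by positivity)
    have h2 : δ ≤ ε/2 := min_le_left _ _
    have h3 : δ ≤ 1 := le_trans (min_le_right _ _) (min_le_left _ _)
    have h4 : δ ≤ |a|/(2*(|c|+1)) := le_trans (min_le_right _ _) (min_le_right _ _)
    have h4' : δ * (2*(|c|+1)) ≤ |a| := (le_div_iff₀ (by positivity)).mp h4
    have hcd : (|c|+1) * δ ≤ |a|/2 := by nlinarith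
    have e2 : δ^3 ≤ δ^2 := by nlinarith [sq_nonneg δ]
    have e3 : (|c|+1)*δ*δ ≤ (|a|/2)*δ := mul_le_mul_of_nonneg_right hcd h1.le
    rcases lt_or_gt_of_ne ha with haneg | hapos'
    · have ht : |(-δ)| < ε := by rw [abs_neg, abs_of_pos h1]; linarith
      have := h (-δ) ht
      have habs : |a| = -a := abs_of_neg haneg
      have hcc2 : c ≤ |c| := le_abs_self c
      have e1 : c * δ^3 ≤ |c| * δ^3 := mul_le_mul_of_nonneg_right hcc2 (by positivity)
      nlinarith [mul_pos hapos h1, mul_nonneg hb (sq_nonneg δ), pow_pos h1 4, abs_nonneg c,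
        mul_le_mul_of_nonneg_left e2 (abs_nonneg c)]
    · have ht : |δ| < ε := by rw [abs_of_pos h1]; linarith
      have := h δ ht
      have habs : |a| = a := abs_of_pos hapos'
      have hcc : -|c| ≤ c := neg_abs_le c
      have e1 : -|c| * δ^3 ≤ c * δ^3 := mul_le_mul_of_nonneg_right hcc (by positivity)
      nlinarith [mul_pos hapos h1, mul_nonneg hb (sq_nonneg δ), pow_pos h1 4, abs_nonneg c,
        mul_le_mul_of_nonneg_left e2 (abs_nonneg c)]

theorem stmt14 {n : ℕ} (hn : 1 ≤ n) (α ψ : Fin n → ℝ) (hα : Monotone α) (ν : ℝ)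
    (hν : ν - α ⟨n - 1, by omega⟩ ≤ 0)
    (g : (Fin n → ℝ) → ℝ)
    (hg : ∀ w, g w = (1/2) * ((1/2) * ∑ i, (w i)^2 - ν)^2
        + (1/2) * ∑ i, α i * (w i)^2 - ∑ i, ψ i * w i) :
    ¬ ∃ w : Fin n → ℝ, IsLocalMax g w := by
  rintro ⟨w, hw⟩
  set k : Fin n := ⟨n - 1, by omega⟩ with hk
  set e : Fin n → ℝ := fun i => if i = k then 1 else 0 with he
  -- sums along the line
  have hS1 : ∀ t : ℝ, ∑ i, ((w + t • e) i)^2 = (∑ i, (w i)^2) + (2*t*(w k) + t^2) := by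
    intro t
    have : ∀ i ∈ univ, ((w + t • e) i)^2
        = (w i)^2 + (if i = k then 2*t*(w i) + t^2 else 0) := by
      intro i _
      simp only [Pi.add_apply, Pi.smul_apply, smul_eq_mul, he]
      split <;> ring
    rw [Finset.sum_congr rfl this, Finset.sum_add_distrib,
      Finset.sum_ite_eq' univ k (fun i => 2*t*(w i) + t^2)]
    simp
  have hS2 : ∀ t : ℝ, ∑ i, α i * ((w + t • e) i)^2
      = (∑ i, α i * (w i)^2) + α k * (2*t*(w k) + t^2) := by
    intro t
    have : ∀ i ∈ univ, α i * ((w + t • e) i)^2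
        = α i * (w i)^2 + (if i = k then α i * (2*t*(w i) + t^2) else 0) := by
      intro i _
      simp only [Pi.add_apply, Pi.smul_apply, smul_eq_mul, he]
      split <;> ring
    rw [Finset.sum_congr rfl this, Finset.sum_add_distrib,
      Finset.sum_ite_eq' univ k (fun i => α i * (2*t*(w i) + t^2))]
    simp
  have hS3 : ∀ t : ℝ, ∑ i, ψ i * ((w + t • e) i) = (∑ i, ψ i * w i) + t * ψ k := by
    intro t
    have : ∀ i ∈ univ, ψ i * ((w + t • e) i)
        = ψ i * w i + (if i = k then t * ψ i else 0) := by
      intro i _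
      simp only [Pi.add_apply, Pi.smul_apply, smul_eq_mul, he]
      split <;> ring
    rw [Finset.sum_congr rfl this, Finset.sum_add_distrib,
      Finset.sum_ite_eq' univ k (fun i => t * ψ i)]
    simp
  set S := ∑ i, (w i)^2 with hSdef
  have hS : 0 ≤ S := Finset.sum_nonneg fun i _ => sq_nonneg _
  set a : ℝ := w k * ((1/2)*S - ν + α k) - ψ k with ha
  set b : ℝ := (1/2)*((1/2)*S - ν + α k + (w k)^2) with hb
  set c : ℝ := (1/2)*(w k) with hc
  have hνk : ν - α k ≤ 0 := hν
  have hbnn : 0 ≤ b := by rw [hb]; nlinarith [sq_nonneg (w k)]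
  have hbc : c^2 ≤ b := by rw [hb, hc]; nlinarith [sq_nonneg (w k)]
  -- local max along the line
  have hm : Filter.Tendsto (fun t : ℝ => w + t • e) (nhds 0) (nhds w) := by
    have hcont : Continuous (fun t : ℝ => w + t • e) :=
      continuous_const.add (continuous_id.smul continuous_const)
    have := hcont.tendsto 0
    simpa using this
  have hloc : ∀ᶠ t : ℝ in nhds 0, g (w + t • e) ≤ g w := hm.eventually hw
  obtain ⟨ε, hε, hε'⟩ := Metric.eventually_nhds_iff.mp hloc
  refine quartic_key a b c ε hbnn hbc hε ?_
  intro t ht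
  have h0 := hε' (show dist t 0 < ε by simpa [Real.dist_eq] using ht)
  rw [hg, hg, hS1, hS2, hS3] at h0
  rw [ha, hb, hc]
  nlinarith [h0]
end

section
/- The function g(w) = (1/2)((1/2)‖w‖² − ν)² + (1/2)wᵀDw − ψᵀw has at most one local maximizer. -/
open Finset

private lemma noMaxLeftOfPos (q : ℝ → ℝ) (hqc : Continuous q) {x y : ℝ} (hxy : x < y)
    (hd : ∀ t ∈ Set.Ioo x y, 0 < deriv q t) (hx : IsLocalMax q x) : False := by
  have mono : StrictMonoOn q (Set.Icc x y) :=
    strictMonoOn_of_deriv_pos (convex_Icc x y) hqc.continuousOn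
      (by rwa [interior_Icc])
  obtain ⟨ε, hε, h⟩ := Metric.eventually_nhds_iff.1 hx
  set t := min (x + ε/2) ((x+y)/2) with ht
  have hxt : x < t := lt_min (by linarith) (by linarith)
  have hty : t ≤ y := le_trans (min_le_right _ _) (by linarith)
  have h1 : q x < q t := mono ⟨le_refl x, le_of_lt hxy⟩ ⟨hxt.le, hty⟩ hxt
  have h2 : q t ≤ q x := by
    apply h
    rw [Real.dist_eq, abs_of_pos (by linarith : (0:ℝ) < t - x)]
    have := min_le_left (x + ε/2) ((x+y)/2)
    rw [← ht] at this
    linarith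
  linarith

private lemma noMaxRightOfNeg (q : ℝ → ℝ) (hqc : Continuous q) {x y : ℝ} (hxy : x < y)
    (hd : ∀ t ∈ Set.Ioo x y, deriv q t < 0) (hy : IsLocalMax q y) : False := by
  have anti : StrictAntiOn q (Set.Icc x y) :=
    strictAntiOn_of_deriv_neg (convex_Icc x y) hqc.continuousOn
      (by rwa [interior_Icc])
  obtain ⟨ε, hε, h⟩ := Metric.eventually_nhds_iff.1 hy
  set t := max (y - ε/2) ((x+y)/2) with ht
  have hty : t < y := max_lt (by linarith) (by linarith)
  have hxt : x ≤ t := le_trans (by linarith) (le_max_right _ _)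
  have h1 : q y < q t := anti ⟨hxt, hty.le⟩ ⟨le_of_lt hxy, le_refl y⟩ hty
  have h2 : q t ≤ q y := by
    apply h
    rw [Real.dist_eq, abs_of_neg (by linarith : t - y < 0)]
    have := le_max_left (y - ε/2) ((x+y)/2)
    rw [← ht] at this
    linarith
  linarith

private lemma quartic_unique (a4 a3 a2 a1 a0 : ℝ) (ha : 0 < a4) (q : ℝ → ℝ)
    (hq : ∀ t, q t = a4*t^4+a3*t^3+a2*t^2+a1*t+a0) {s r : ℝ} (hsr : s < r)
    (hs : IsLocalMax q s) (hr : IsLocalMax q r) : False := by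
  have hqeq : q = fun t => a4*t^4+a3*t^3+a2*t^2+a1*t+a0 := funext hq
  subst hqeq
  set q : ℝ → ℝ := fun t => a4*t^4+a3*t^3+a2*t^2+a1*t+a0 with hqdef
  have hqc : Continuous q := by
    rw [hqdef]; continuity
  have hder : ∀ t : ℝ, HasDerivAt q (4*a4*t^3+3*a3*t^2+2*a2*t+a1) t := by
    intro t
    have h4 := (hasDerivAt_pow 4 t).const_mul a4
    have h3 := (hasDerivAt_pow 3 t).const_mul a3
    have h2 := (hasDerivAt_pow 2 t).const_mul a2
    have h1 := (hasDerivAt_id t).const_mul a1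
    have hsum := (((h4.add h3).add h2).add (h1.add_const a0))
    have heq : (fun x : ℝ => a4*x^4+a3*x^3+a2*x^2+(a1*(id x)+a0)) = q := by
      funext x
      simp only [hqdef, id]
      ring
    replace hsum : HasDerivAt (fun x : ℝ => a4*x^4+a3*x^3+a2*x^2+(a1*(id x)+a0)) _ t := hsum
    rw [heq] at hsum
    convert hsum using 1
    push_cast
    ring
  have hderiv_eq : ∀ t, deriv q t = 4*a4*t^3+3*a3*t^2+2*a2*t+a1 := fun t => (hder t).deriv
  have hds : 4*a4*s^3+3*a3*s^2+2*a2*s+a1 = 0 := by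
    rw [← hderiv_eq]; exact hs.deriv_eq_zero
  have hdr : 4*a4*r^3+3*a3*r^2+2*a2*r+a1 = 0 := by
    rw [← hderiv_eq]; exact hr.deriv_eq_zero
  have hsrne : s - r ≠ 0 := sub_ne_zero.mpr (ne_of_lt hsr)
  have ha4ne : (4:ℝ)*a4 ≠ 0 := by positivity
  have ha2eq : a2 = -(4*a4*(s^2+s*r+r^2) + 3*a3*(s+r))/2 := by
    have key2 : (s - r) * (2*a2 + (4*a4*(s^2+s*r+r^2) + 3*a3*(s+r))) = 0 := by
      linear_combination hds - hdr
    rcases mul_eq_zero.mp key2 with h | h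
    · exact absurd h hsrne
    · linarith
  have ha1eq : a1 = -(4*a4*s^3+3*a3*s^2+2*a2*s) := by linarith
  set m : ℝ := -(3*a3)/(4*a4) - s - r with hm
  have hfac : ∀ t : ℝ, 4*a4*t^3+3*a3*t^2+2*a2*t+a1 = 4*a4*(t-s)*(t-r)*(t-m) := by
    intro t
    rw [ha1eq, ha2eq, hm]
    field_simp [ha4ne]
    ring
  rcases le_or_gt r m with h1 | h1
  · refine noMaxLeftOfPos q hqc hsr (fun t ht => ?_) hs
    rw [hderiv_eq, hfac]
    have hp : 0 < (4*a4*(t-s)) * ((t-r)*(t-m)) :=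
      mul_pos (mul_pos (by linarith) (by linarith [ht.1]))
        (mul_pos_of_neg_of_neg (by linarith [ht.2]) (by linarith [ht.2]))
    have : 4*a4*(t-s)*(t-r)*(t-m) = (4*a4*(t-s)) * ((t-r)*(t-m)) := by ring
    rw [this]; exact hp
  · rcases le_or_gt m s with h2 | h2
    · refine noMaxRightOfNeg q hqc hsr (fun t ht => ?_) hr
      rw [hderiv_eq, hfac]
      have hp : (4*a4*(t-s)) * ((t-m)) * (t-r) < 0 :=
        mul_neg_of_pos_of_neg
          (mul_pos (mul_pos (by linarith) (by linarith [ht.1])) (by linarith [ht.1]))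
          (by linarith [ht.2])
      have : 4*a4*(t-s)*(t-r)*(t-m) = (4*a4*(t-s)) * ((t-m)) * (t-r) := by ring
      rw [this]; exact hp
    · refine noMaxLeftOfPos q hqc (lt_add_one r) (fun t ht => ?_) hr
      rw [hderiv_eq, hfac]
      have hp : 0 < (4*a4*(t-s)) * (t-r) * (t-m) :=
        mul_pos (mul_pos (mul_pos (by linarith) (by linarith [ht.1])) (by linarith [ht.1]))
          (by linarith [ht.1])
      have : 4*a4*(t-s)*(t-r)*(t-m) = (4*a4*(t-s)) * (t-r) * (t-m) := by ring
      rw [this]; exact hp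

theorem stmt16 {n : ℕ} (hn : 1 ≤ n) (α ψ : Fin n → ℝ) (hα : Monotone α) (ν : ℝ)
    (g : (Fin n → ℝ) → ℝ)
    (hg : ∀ w, g w = (1/2) * ((1/2) * ∑ i, (w i)^2 - ν)^2
        + (1/2) * ∑ i, α i * (w i)^2 - ∑ i, ψ i * w i)
    (w₁ w₂ : Fin n → ℝ) (h₁ : IsLocalMax g w₁) (h₂ : IsLocalMax g w₂) :
    w₁ = w₂ := by
  by_contra hne
  set v : Fin n → ℝ := w₂ - w₁ with hv
  have hvne : ∃ i, v i ≠ 0 := by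
    by_contra h
    push_neg at h
    apply hne
    funext i
    have := h i
    simp [hv, Pi.sub_apply, sub_eq_zero] at this
    exact this.symm
  obtain ⟨i₀, hi₀⟩ := hvne
  set S : ℝ := ∑ i, v i ^ 2 with hS
  set P : ℝ := ∑ i, w₁ i * v i with hP
  set W : ℝ := ∑ i, w₁ i ^ 2 with hW
  set A1 : ℝ := ∑ i, α i * v i ^ 2 with hA1
  set A2 : ℝ := ∑ i, α i * (w₁ i * v i) with hA2
  set A3 : ℝ := ∑ i, α i * w₁ i ^ 2 with hA3
  set B1 : ℝ := ∑ i, ψ i * v i with hB1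
  set B2 : ℝ := ∑ i, ψ i * w₁ i with hB2
  have hSpos : 0 < S := by
    rw [hS]
    have h1 : 0 < v i₀ ^ 2 := by positivity
    have h2 : v i₀ ^ 2 ≤ ∑ i, v i ^ 2 :=
      Finset.single_le_sum (fun j _ => sq_nonneg (v j)) (Finset.mem_univ i₀)
    linarith
  -- the curve
  have hcont : Continuous (fun t : ℝ => w₁ + t • v) := by
    exact continuous_const.add (continuous_id.smul continuous_const)
  set q : ℝ → ℝ := fun t => g (w₁ + t • v) with hqdef
  have hmax : ∀ w : Fin n → ℝ, IsLocalMax g w → ∀ t₀ : ℝ, w₁ + t₀ • v = w → IsLocalMax q t₀ := by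
    intro w hw t₀ hteq
    have htend : Filter.Tendsto (fun t : ℝ => w₁ + t • v) (nhds t₀) (nhds w) := by
      have := hcont.tendsto t₀
      rwa [hteq] at this
    have hev := htend.eventually hw
    filter_upwards [hev] with t htle
    simp only [hqdef]
    rw [hteq]
    exact htle
  have hq0 : IsLocalMax q 0 := by
    apply hmax w₁ h₁ 0
    funext j; simp
  have hq1 : IsLocalMax q 1 := by
    apply hmax w₂ h₂ 1
    funext j; simp [hv]
  -- sums expansion
  have hsum1 : ∀ t : ℝ, ∑ i, (w₁ i + t * v i)^2 = W + 2*t*P + t^2*S := by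
    intro t
    rw [hW, hP, hS]
    simp only [Finset.mul_sum, ← Finset.sum_add_distrib]
    exact Finset.sum_congr rfl fun i _ => by ring
  have hsum2 : ∀ t : ℝ, ∑ i, α i * (w₁ i + t * v i)^2 = A3 + 2*t*A2 + t^2*A1 := by
    intro t
    rw [hA3, hA2, hA1]
    simp only [Finset.mul_sum, ← Finset.sum_add_distrib]
    exact Finset.sum_congr rfl fun i _ => by ring
  have hsum3 : ∀ t : ℝ, ∑ i, ψ i * (w₁ i + t * v i) = B2 + t*B1 := by
    intro t
    rw [hB2, hB1]
    simp only [Finset.mul_sum, ← Finset.sum_add_distrib]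
    exact Finset.sum_congr rfl fun i _ => by ring
  have hqpoly : ∀ t : ℝ, q t = (S^2/8)*t^4 + (S*P/2)*t^3
      + ((P^2 + (W/2 - ν)*S + A1)/2)*t^2 + ((W/2 - ν)*P + A2 - B1)*t
      + ((W/2 - ν)^2/2 + A3/2 - B2) := by
    intro t
    simp only [hqdef]
    rw [hg]
    simp only [Pi.add_apply, Pi.smul_apply, smul_eq_mul]
    rw [hsum1, hsum2, hsum3]
    ring
  have ha4 : 0 < S^2/8 := by positivity
  exact quartic_unique (S^2/8) (S*P/2) ((P^2 + (W/2 - ν)*S + A1)/2)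
    ((W/2 - ν)*P + A2 - B1) ((W/2 - ν)^2/2 + A3/2 - B2) ha4 q hqpoly
    zero_lt_one hq0 hq1
end

section
/- If w̲ is a local minimizer and w̄ is a local maximizer of g(w) = (1/2)((1/2)‖w‖² − ν)² + (1/2)wᵀDw − ψᵀw, then ‖w̄‖ < ‖w̲‖. -/
open Finset
open scoped Topology

section Aux17

open Filter Topology

private lemma sum_update_aux17 {n : ℕ} (w : Fin n → ℝ) (i : Fin n) (a : ℝ) (F : Fin n → ℝ → ℝ) :
    ∑ j, F j (Function.update w i a j) = ∑ j, F j (w j) + F i a - F i (w i) := by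
  rw [← Finset.add_sum_erase _ (fun j => F j (Function.update w i a j)) (mem_univ i),
      ← Finset.add_sum_erase _ (fun j => F j (w j)) (mem_univ i)]
  have : ∀ j ∈ univ.erase i, F j (Function.update w i a j) = F j (w j) := by
    intro j hj
    rw [Function.update_of_ne (Finset.mem_erase.mp hj).1]
  rw [Finset.sum_congr rfl this, Function.update_self]
  ring

private lemma localmin_quartic17 {a b c d e : ℝ}
    (h : IsLocalMin (fun t : ℝ => a + b*t + c*t^2 + d*t^3 + e*t^4) 0) :
    b = 0 ∧ 0 ≤ c := by
  have hb : b = 0 := by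
    have hd : HasDerivAt (fun t : ℝ => a + b*t + c*t^2 + d*t^3 + e*t^4) b 0 := by
      have h1 : HasDerivAt (fun t : ℝ => a + b*t + c*t^2 + d*t^3 + e*t^4)
          (0 + (b * 1) + (c * (2 * 0 ^ 1)) + (d * (3 * 0 ^ 2)) + (e * (4 * 0 ^ 3))) 0 := by
        exact ((((hasDerivAt_const 0 a).add ((hasDerivAt_id 0).const_mul b)).add
          ((hasDerivAt_pow 2 0).const_mul c)).add ((hasDerivAt_pow 3 0).const_mul d)).add
          ((hasDerivAt_pow 4 0).const_mul e)
      simpa using h1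
    exact h.hasDerivAt_eq_zero hd
  subst hb
  refine ⟨rfl, ?_⟩
  have h2 : ∀ᶠ t in 𝓝[≠] (0:ℝ), 0 ≤ c + d*t + e*t^2 := by
    filter_upwards [(h.filter_mono nhdsWithin_le_nhds), self_mem_nhdsWithin] with t ht htne
    simp only [Set.mem_compl_iff, Set.mem_singleton_iff] at htne
    simp only [mul_zero, zero_mul, add_zero, zero_pow, ne_eq] at ht
    have ht2 : (0:ℝ) < t^2 := by positivity
    nlinarith [ht, ht2]
  have h3 : Tendsto (fun t : ℝ => c + d*t + e*t^2) (𝓝[≠] (0:ℝ)) (𝓝 c) := by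
    have : ContinuousAt (fun t : ℝ => c + d*t + e*t^2) 0 := by fun_prop
    have h4 := this.tendsto.mono_left (nhdsWithin_le_nhds (s := {(0:ℝ)}ᶜ))
    simpa using h4
  exact ge_of_tendsto h3 h2

private lemma localmax_quartic17 {a b c d e : ℝ}
    (h : IsLocalMax (fun t : ℝ => a + b*t + c*t^2 + d*t^3 + e*t^4) 0) :
    b = 0 ∧ c ≤ 0 := by
  have hneg : IsLocalMin (fun t : ℝ => (-a) + (-b)*t + (-c)*t^2 + (-d)*t^3 + (-e)*t^4) 0 := by
    have := h.neg
    convert this using 2 with t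
    · rfl
    ring
  obtain ⟨h1, h2⟩ := localmin_quartic17 hneg
  constructor <;> linarith

private lemma quartic_max_false17 {a d : ℝ}
    (h : IsLocalMax (fun t : ℝ => a + d*t^3 + t^4/8) 0) : False := by
  rcases le_or_gt 0 d with hd | hd
  · have h2 : ∀ᶠ t in 𝓝[>] (0:ℝ), a + d*t^3 + t^4/8 ≤ a :=
      (h.filter_mono nhdsWithin_le_nhds).mono (by intro t ht; simpa using ht)
    obtain ⟨t, ht, htpos⟩ := (h2.and self_mem_nhdsWithin).exists
    nlinarith [pow_pos htpos 3, pow_pos htpos 4]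
  · have h2 : ∀ᶠ t in 𝓝[<] (0:ℝ), a + d*t^3 + t^4/8 ≤ a :=
      (h.filter_mono nhdsWithin_le_nhds).mono (by intro t ht; simpa using ht)
    obtain ⟨t, ht, htneg⟩ := (h2.and self_mem_nhdsWithin).exists
    nlinarith [pow_pos (neg_pos.mpr htneg) 3, pow_pos (neg_pos.mpr htneg) 4]

private lemma compose_quartic17 {n : ℕ} (α ψ : Fin n → ℝ) (ν : ℝ) (g : (Fin n → ℝ) → ℝ)
    (hg : ∀ w, g w = (1/2) * ((1/2) * ∑ i, (w i)^2 - ν)^2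
        + (1/2) * ∑ i, α i * (w i)^2 - ∑ i, ψ i * w i)
    (w : Fin n → ℝ) (i : Fin n) :
    (fun t : ℝ => g (Function.update w i (w i + t))) =
      (fun t : ℝ => g w + (((1/2) * ∑ j, (w j)^2 - ν + α i) * w i - ψ i) * t
        + ((1/2) * ((1/2) * ∑ j, (w j)^2 - ν + α i + (w i)^2)) * t^2
        + (w i / 2) * t^3 + (1/8) * t^4) := by
  funext t
  rw [hg, hg]
  have e1 : ∑ j, (Function.update w i (w i + t) j)^2
      = ∑ j, (w j)^2 + (w i + t)^2 - (w i)^2 :=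
    sum_update_aux17 w i (w i + t) (fun _ x => x^2)
  have e2 : ∑ j, α j * (Function.update w i (w i + t) j)^2
      = ∑ j, α j * (w j)^2 + α i * (w i + t)^2 - α i * (w i)^2 :=
    sum_update_aux17 w i (w i + t) (fun j x => α j * x^2)
  have e3 : ∑ j, ψ j * (Function.update w i (w i + t) j)
      = ∑ j, ψ j * (w j) + ψ i * (w i + t) - ψ i * (w i) :=
    sum_update_aux17 w i (w i + t) (fun j x => ψ j * x)
  rw [e1, e2, e3]
  ring

private lemma dir_tendsto17 {n : ℕ} (w : Fin n → ℝ) (i : Fin n) :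
    Filter.Tendsto (fun t : ℝ => Function.update w i (w i + t)) (𝓝 0) (𝓝 w) := by
  have hc : Continuous (fun t : ℝ => Function.update w i (w i + t)) := by
    apply continuous_pi
    intro j
    simp only [Function.update_apply]
    by_cases hj : j = i
    · simp only [hj, if_pos rfl]
      exact continuous_const.add continuous_id
    · simp only [if_neg hj]
      exact continuous_const
  have h0 : Function.update w i (w i + 0) = w := by simp
  have := hc.tendsto 0
  rwa [h0] at this

end Aux17

theorem stmt17 {n : ℕ} (hn : 1 ≤ n) (α ψ : Fin n → ℝ) (hα : Monotone α) (ν : ℝ)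
    (g : (Fin n → ℝ) → ℝ)
    (hg : ∀ w, g w = (1/2) * ((1/2) * ∑ i, (w i)^2 - ν)^2
        + (1/2) * ∑ i, α i * (w i)^2 - ∑ i, ψ i * w i)
    (wl wm : Fin n → ℝ) (hl : IsLocalMin g wl) (hm : IsLocalMax g wm) :
    Real.sqrt (∑ i, (wm i)^2) < Real.sqrt (∑ i, (wl i)^2) := by
  have key_min : ∀ i : Fin n,
      ((1/2) * ∑ j, (wl j)^2 - ν + α i) * wl i - ψ i = 0 ∧
      0 ≤ (1/2) * ((1/2) * ∑ j, (wl j)^2 - ν + α i + (wl i)^2) := by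
    intro i
    have hdir : IsLocalMin (fun t : ℝ => g (Function.update wl i (wl i + t))) 0 := by
      have h1 : IsMinFilter g (𝓝 wl) (Function.update wl i (wl i + (0:ℝ))) := by
        rw [add_zero, Function.update_eq_self]; exact hl
      exact IsMinFilter.comp_tendsto (g := fun t : ℝ => Function.update wl i (wl i + t))
        (b := (0:ℝ)) h1 (dir_tendsto17 wl i)
    rw [compose_quartic17 α ψ ν g hg wl i] at hdir
    exact localmin_quartic17 hdir
  have key_max : ∀ i : Fin n,
      ((1/2) * ∑ j, (wm j)^2 - ν + α i) * wm i - ψ i = 0 ∧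
      (1/2) * ((1/2) * ∑ j, (wm j)^2 - ν + α i + (wm i)^2) ≤ 0 := by
    intro i
    have hdir : IsLocalMax (fun t : ℝ => g (Function.update wm i (wm i + t))) 0 := by
      have h1 : IsMaxFilter g (𝓝 wm) (Function.update wm i (wm i + (0:ℝ))) := by
        rw [add_zero, Function.update_eq_self]; exact hm
      exact IsMaxFilter.comp_tendsto (g := fun t : ℝ => Function.update wm i (wm i + t))
        (b := (0:ℝ)) h1 (dir_tendsto17 wm i)
    rw [compose_quartic17 α ψ ν g hg wm i] at hdir
    exact localmax_quartic17 hdir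
  have hsq : ∑ i, (wm i)^2 < ∑ i, (wl i)^2 := by
    by_contra hcon
    push_neg at hcon
    -- hcon : ∑ wl² ≤ ∑ wm²
    have hterm : ∀ i : Fin n, (wm i)^2 ≤ (wl i)^2 := by
      intro i
      have h1 := (key_min i).2
      have h2 := (key_max i).2
      linarith
    have hsum : ∑ i, (wm i)^2 ≤ ∑ i, (wl i)^2 :=
      Finset.sum_le_sum fun i _ => hterm i
    have hEq : ∑ i, (wm i)^2 = ∑ i, (wl i)^2 := le_antisymm hsum hcon
    set i0 : Fin n := ⟨0, hn⟩ with hi0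
    have htermEq : (wm i0)^2 = (wl i0)^2 := by
      have := (Finset.sum_eq_sum_iff_of_le (fun i _ => hterm i)).mp hEq i0 (mem_univ i0)
      exact this
    have hc2 : (1/2) * ((1/2) * ∑ j, (wm j)^2 - ν + α i0 + (wm i0)^2) = 0 := by
      have h1 := (key_min i0).2
      have h2 := (key_max i0).2
      linarith
    have hdir : IsLocalMax (fun t : ℝ => g (Function.update wm i0 (wm i0 + t))) 0 := by
      have h1 : IsMaxFilter g (𝓝 wm) (Function.update wm i0 (wm i0 + (0:ℝ))) := by
        rw [add_zero, Function.update_eq_self]; exact hm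
      exact IsMaxFilter.comp_tendsto (g := fun t : ℝ => Function.update wm i0 (wm i0 + t))
        (b := (0:ℝ)) h1 (dir_tendsto17 wm i0)
    rw [compose_quartic17 α ψ ν g hg wm i0] at hdir
    have hshape : (fun t : ℝ => g wm + (((1/2) * ∑ j, (wm j)^2 - ν + α i0) * wm i0 - ψ i0) * t
        + ((1/2) * ((1/2) * ∑ j, (wm j)^2 - ν + α i0 + (wm i0)^2)) * t^2
        + (wm i0 / 2) * t^3 + (1/8) * t^4)
        = (fun t : ℝ => g wm + (wm i0 / 2)*t^3 + t^4/8) := by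
      funext t
      have hb := (key_max i0).1
      linear_combination t * hb + t^2 * hc2
    rw [hshape] at hdir
    exact quartic_max_false17 hdir
  have hnn : 0 ≤ ∑ i, (wm i)^2 := Finset.sum_nonneg fun i _ => sq_nonneg _
  exact Real.sqrt_lt_sqrt hnn hsq
end
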